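/- arXiv:1209.2203 — 9 statements merged into one kernel-verified Lean document; each statement's English description precedes it below -/
import Mathlib

section
/- Let f : [0,∞) → [0,∞) satisfy: (a) f is right-continuous; (b) f is non-increasing and f(s) → 0 as s → ∞; (c) there exist real numbers α > 0 and A > 0 such that r·f(s+r) ≤ A·f(s)^{1+α} for all s ≥ 0 and all r ∈ [0,1]. Then for every s₀ ≥ 0 with f(s₀)^α ≤ (2A)^{-1}, one has f(s) = 0 for every s > s₀ + 2A(1 − 2^{−α})^{−1} f(s₀)^α. -/
/-- De Giorgi's iteration lemma (Lemma 1 of the paper). `f : [0,∞) → [0,∞)` is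
encoded as a real function that is nonnegative on `[0,∞)`, right-continuous there,
non-increasing there, and tending to `0` at `+∞`.  Real powers are `Real.rpow`. -/
theorem deGiorgi_lemma (f : ℝ → ℝ)
    (hf_nonneg : ∀ s : ℝ, 0 ≤ s → 0 ≤ f s)
    (hf_rightCont : ∀ s : ℝ, 0 ≤ s → ContinuousWithinAt f (Set.Ici s) s)
    (hf_anti : AntitoneOn f (Set.Ici (0 : ℝ)))
    (hf_lim : Filter.Tendsto f Filter.atTop (nhds 0))
    (α A : ℝ) (hα : 0 < α) (hA : 0 < A)
    (hiter : ∀ s : ℝ, 0 ≤ s → ∀ r : ℝ, 0 ≤ r → r ≤ 1 →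
      r * f (s + r) ≤ A * (f s) ^ (1 + α))
    (s₀ : ℝ) (hs₀ : 0 ≤ s₀) (hsmall : (f s₀) ^ α ≤ (2 * A)⁻¹) :
    ∀ s : ℝ, s₀ + 2 * A * (1 - (2 : ℝ) ^ (-α))⁻¹ * (f s₀) ^ α < s → f s = 0 := by
  intro s hs
  have hfs₀ : 0 ≤ f s₀ := hf_nonneg s₀ hs₀
  set q : ℝ := (2 : ℝ) ^ (-α) with hq
  have hq0 : 0 < q := Real.rpow_pos_of_pos (by norm_num) _
  have hq1 : q < 1 := Real.rpow_lt_one_of_one_lt_of_neg (by norm_num) (by linarith)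
  set c : ℝ := 2 * A * (f s₀) ^ α with hc
  have hc0 : 0 ≤ c := by positivity
  -- the iteration sequence
  set T : ℕ → ℝ := fun n => Nat.rec (motive := fun _ => ℝ) s₀
    (fun _ t => t + 2 * A * (f t) ^ α) n with hT
  have hTsucc : ∀ n, T (n + 1) = T n + 2 * A * (f (T n)) ^ α := fun n => rfl
  -- key step
  have key : ∀ t : ℝ, 0 ≤ t → f t ≤ f s₀ → f (t + 2 * A * (f t) ^ α) ≤ f t / 2 := by
    intro t ht hle
    have ht0 : 0 ≤ f t := hf_nonneg t ht
    have hfα : (f t) ^ α ≤ (f s₀) ^ α := Real.rpow_le_rpow ht0 hle hα.le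
    set r : ℝ := 2 * A * (f t) ^ α with hr
    have hr0 : 0 ≤ r := by positivity
    have hr1 : r ≤ 1 := by
      have h2 : (f t) ^ α ≤ (2 * A)⁻¹ := hfα.trans hsmall
      have : r ≤ 2 * A * (2 * A)⁻¹ := by
        apply mul_le_mul_of_nonneg_left h2 (by positivity)
      rwa [mul_inv_cancel₀ (by positivity)] at this
    by_cases hft : f t = 0
    · have hr' : r = 0 := by
        rw [hr, hft, Real.zero_rpow hα.ne', mul_zero]
      rw [hr', add_zero, hft]
      norm_num
    · have hftpos : 0 < f t := lt_of_le_of_ne ht0 (Ne.symm hft)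
      have h1 := hiter t ht r hr0 hr1
      have h2 : (f t) ^ (1 + α) = f t * (f t) ^ α := by
        rw [Real.rpow_add hftpos, Real.rpow_one]
      have hrpos : 0 < r := by
        have : 0 < (f t) ^ α := Real.rpow_pos_of_pos hftpos _
        positivity
      have h3 : r * f (t + r) ≤ r * (f t / 2) := by
        calc r * f (t + r) ≤ A * (f t) ^ (1 + α) := h1
          _ = r * (f t / 2) := by rw [h2, hr]; ring
      exact le_of_mul_le_mul_left h3 hrpos
  -- rpow computation
  have hpow : ∀ n : ℕ, ((1 / 2 : ℝ) ^ n * f s₀) ^ α = q ^ n * (f s₀) ^ α := by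
    intro n
    rw [Real.mul_rpow (by positivity) hfs₀]
    congr 1
    have hhalf : (1 / 2 : ℝ) ^ α = q := by
      rw [hq, one_div, ← Real.rpow_neg_one (2 : ℝ),
        ← Real.rpow_mul (by norm_num : (0:ℝ) ≤ 2)]
      norm_num
    rw [← hhalf, ← Real.rpow_natCast (1 / 2 : ℝ) n,
      ← Real.rpow_mul (by norm_num : (0:ℝ) ≤ 1/2), mul_comm ((n:ℝ)) α,
      Real.rpow_mul (by norm_num : (0:ℝ) ≤ 1/2), Real.rpow_natCast]
  -- main induction
  have main : ∀ n : ℕ, s₀ ≤ T n ∧ f (T n) ≤ (1 / 2 : ℝ) ^ n * f s₀ ∧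
      T n ≤ s₀ + c * (1 - q ^ n) / (1 - q) := by
    intro n
    induction n with
    | zero =>
      have hT0 : T 0 = s₀ := rfl
      rw [hT0]
      refine ⟨le_refl _, by norm_num, by norm_num⟩
    | succ n ih =>
      obtain ⟨h1, h2, h3⟩ := ih
      have ht0 : 0 ≤ T n := hs₀.trans h1
      have hle : f (T n) ≤ f s₀ := hf_anti (Set.mem_Ici.mpr hs₀) (Set.mem_Ici.mpr ht0) h1
      have hstep := key (T n) ht0 hle
      have hfTn0 : 0 ≤ f (T n) := hf_nonneg _ ht0
      have hr0 : 0 ≤ 2 * A * (f (T n)) ^ α :=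
        mul_nonneg (by positivity) (Real.rpow_nonneg hfTn0 _)
      refine ⟨by rw [hTsucc]; linarith, ?_, ?_⟩
      · rw [hTsucc]
        calc f (T n + 2 * A * (f (T n)) ^ α) ≤ f (T n) / 2 := hstep
          _ ≤ ((1 / 2 : ℝ) ^ n * f s₀) / 2 := by linarith
          _ = (1 / 2 : ℝ) ^ (n + 1) * f s₀ := by ring
      · have hbound : (f (T n)) ^ α ≤ q ^ n * (f s₀) ^ α := by
          calc (f (T n)) ^ α ≤ ((1 / 2 : ℝ) ^ n * f s₀) ^ α :=
                Real.rpow_le_rpow hfTn0 h2 hα.le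
            _ = q ^ n * (f s₀) ^ α := hpow n
        have hrb : 2 * A * (f (T n)) ^ α ≤ c * q ^ n := by
          rw [hc]
          calc 2 * A * (f (T n)) ^ α ≤ 2 * A * (q ^ n * (f s₀) ^ α) := by
                exact mul_le_mul_of_nonneg_left hbound (by positivity)
            _ = 2 * A * (f s₀) ^ α * q ^ n := by ring
        have heq : c * (1 - q ^ n) / (1 - q) + c * q ^ n = c * (1 - q ^ (n + 1)) / (1 - q) := by
          rw [div_add' _ _ _ (by linarith : (1:ℝ) - q ≠ 0)]
          congr 1
          ring
        rw [hTsucc]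
        linarith
  -- conclude
  have hTb : ∀ n : ℕ, T n ≤ s₀ + c / (1 - q) := by
    intro n
    have h3 := (main n).2.2
    have hq' : 0 < 1 - q := by linarith
    have hqn : 0 ≤ q ^ n := by positivity
    have hnum : c * (1 - q ^ n) ≤ c := by nlinarith
    have hdiv : c * (1 - q ^ n) / (1 - q) ≤ c / (1 - q) := by
      gcongr
    linarith
  have hconst : s₀ + 2 * A * (1 - (2 : ℝ) ^ (-α))⁻¹ * (f s₀) ^ α = s₀ + c / (1 - q) := by
    rw [hc, hq, div_eq_mul_inv]; ring
  rw [hconst] at hs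
  have hs0 : (0:ℝ) ≤ s := by
    have : 0 ≤ c / (1 - q) := div_nonneg hc0 (by linarith)
    linarith
  have hfs_le : ∀ n : ℕ, f s ≤ (1 / 2 : ℝ) ^ n * f s₀ := by
    intro n
    obtain ⟨h1, h2, _⟩ := main n
    have hTn : T n ≤ s := le_of_lt (lt_of_le_of_lt (hTb n) hs)
    have hT0 : 0 ≤ T n := hs₀.trans h1
    exact (hf_anti (Set.mem_Ici.mpr hT0) (Set.mem_Ici.mpr hs0) hTn).trans h2
  have hlim : Filter.Tendsto (fun n : ℕ => (1 / 2 : ℝ) ^ n * f s₀) Filter.atTop (nhds 0) := by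
    have h := tendsto_pow_atTop_nhds_zero_of_lt_one (by norm_num : (0:ℝ) ≤ 1/2)
      (by norm_num : (1/2:ℝ) < 1)
    have := h.mul_const (f s₀)
    simpa using this
  have hle0 : f s ≤ 0 := ge_of_tendsto' hlim hfs_le
  exact le_antisymm hle0 (hf_nonneg s hs0)
end

section
/- Let (X, μ) be a finite measure space, let β > 1 and C ≥ 1 be real numbers, and let ψ : X → [0,∞) be measurable with ‖ψ‖_{L²(μ)} < ∞. Assume that for every real p ≥ 2 one has ‖ψ‖_{L^{pβ}(μ)} ≤ (C p)^{1/p} ‖ψ‖_{L^p(μ)}. Then ψ ∈ L^∞(μ), the series Σ_{k=0}^∞ log(2Cβ^k)/(2β^k) converges, and ‖ψ‖_{L^∞(μ)} ≤ exp( Σ_{k=0}^∞ log(2Cβ^k)/(2β^k) ) · ‖ψ‖_{L²(μ)}. -/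
open MeasureTheory Filter
open scoped ENNReal NNReal

/-- The Moser iteration step in Yau's C⁰ estimate: a reverse Hölder inequality
`‖ψ‖_{L^{pβ}} ≤ (Cp)^{1/p} ‖ψ‖_{L^p}` for all `p ≥ 2` upgrades an `L²` bound to an
`L^∞` bound, with
`‖ψ‖_{L^∞} ≤ exp( Σ_{k=0}^∞ log(2Cβ^k)/(2β^k) ) ‖ψ‖_{L²}`. -/
theorem moser_iteration {X : Type*} [MeasurableSpace X] (μ : Measure X)
    [IsFiniteMeasure μ] (β C : ℝ) (hβ : 1 < β) (hC : 1 ≤ C)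
    (ψ : X → ℝ) (hmeas : Measurable ψ) (hpos : ∀ x, 0 ≤ ψ x)
    (hL2 : eLpNorm ψ 2 μ < ⊤)
    (hiter : ∀ p : ℝ, 2 ≤ p →
      eLpNorm ψ (ENNReal.ofReal (p * β)) μ ≤
        ENNReal.ofReal ((C * p) ^ (1 / p)) * eLpNorm ψ (ENNReal.ofReal p) μ) :
    MemLp ψ ⊤ μ ∧
    Summable (fun k : ℕ => Real.log (2 * C * β ^ k) / (2 * β ^ k)) ∧
    eLpNorm ψ ⊤ μ ≤
      ENNReal.ofReal (Real.exp (∑' k : ℕ, Real.log (2 * C * β ^ k) / (2 * β ^ k))) *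
        eLpNorm ψ 2 μ := by
  have hβ0 : (0:ℝ) < β := lt_trans one_pos hβ
  set a : ℕ → ℝ := fun k => Real.log (2 * C * β ^ k) / (2 * β ^ k) with ha_def
  set p : ℕ → ℝ := fun k => 2 * β ^ k with hp_def
  have hppos : ∀ k, 0 < p k := fun k => by positivity
  have hbone : ∀ k, (1:ℝ) ≤ β ^ k := fun k => one_le_pow₀ hβ.le
  have hp2 : ∀ k, 2 ≤ p k := fun k => by
    have := hbone k; simp only [hp_def]; nlinarith
  have harg : ∀ k, (1:ℝ) ≤ 2 * C * β ^ k := fun k => by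
    have := hbone k; nlinarith
  have hanonneg : ∀ k, 0 ≤ a k := fun k =>
    div_nonneg (Real.log_nonneg (harg k)) (by positivity)
  -- summability
  have hsum : Summable a := by
    have h1 : Summable (fun k : ℕ => (Real.log (2*C) / 2) * β⁻¹ ^ k) :=
      (summable_geometric_of_lt_one (by positivity) (inv_lt_one_of_one_lt₀ hβ)).mul_left _
    have hrlt : ‖(β⁻¹ : ℝ)‖ < 1 := by
      rw [Real.norm_eq_abs, abs_of_pos (by positivity)]
      exact inv_lt_one_of_one_lt₀ hβ
    have h2 : Summable (fun k : ℕ => (Real.log β / 2) * ((k:ℝ) * β⁻¹ ^ k)) := by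
      have := summable_pow_mul_geometric_of_norm_lt_one (R := ℝ) 1 hrlt
      simpa [pow_one] using this.mul_left (Real.log β / 2)
    have := h1.add h2
    refine this.congr fun k => ?_
    have hbk : (0:ℝ) < β ^ k := by positivity
    have hlog : Real.log (2 * C * β ^ k) = Real.log (2 * C) + k * Real.log β := by
      rw [Real.log_mul (by positivity) hbk.ne', Real.log_pow]
    simp only [ha_def, hlog, inv_pow]
    field_simp
  -- step inequality
  have hstep : ∀ k, eLpNorm ψ (ENNReal.ofReal (p (k+1))) μ ≤
      ENNReal.ofReal (Real.exp (a k)) * eLpNorm ψ (ENNReal.ofReal (p k)) μ := by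
    intro k
    have h1 : p (k+1) = p k * β := by simp [hp_def, pow_succ]; ring
    have h2 : (C * p k) ^ (1 / p k) = Real.exp (a k) := by
      have hc : (0:ℝ) < C * p k := by have := hppos k; positivity
      rw [Real.rpow_def_of_pos hc]
      congr 1
      have : C * p k = 2 * C * β ^ k := by simp [hp_def]; ring
      rw [this]
      simp only [ha_def, hp_def, mul_one_div]
    rw [h1, ← h2]
    exact hiter (p k) (hp2 k)
  -- iterate
  have hiterk : ∀ k, eLpNorm ψ (ENNReal.ofReal (p k)) μ ≤
      ENNReal.ofReal (Real.exp (∑ j ∈ Finset.range k, a j)) * eLpNorm ψ 2 μ := by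
    intro k
    induction k with
    | zero =>
      simp only [Finset.range_zero, Finset.sum_empty, Real.exp_zero, ENNReal.ofReal_one, one_mul]
      have : ENNReal.ofReal (p 0) = (2 : ℝ≥0∞) := by
        simp [hp_def]
      rw [this]
    | succ n ih =>
      calc eLpNorm ψ (ENNReal.ofReal (p (n+1))) μ
          ≤ ENNReal.ofReal (Real.exp (a n)) * eLpNorm ψ (ENNReal.ofReal (p n)) μ := hstep n
        _ ≤ ENNReal.ofReal (Real.exp (a n)) *
            (ENNReal.ofReal (Real.exp (∑ j ∈ Finset.range n, a j)) * eLpNorm ψ 2 μ) := by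
            exact mul_le_mul_right ih _
        _ = ENNReal.ofReal (Real.exp (∑ j ∈ Finset.range (n+1), a j)) * eLpNorm ψ 2 μ := by
            rw [← mul_assoc, ← ENNReal.ofReal_mul (Real.exp_nonneg _), ← Real.exp_add,
              Finset.sum_range_succ, add_comm (a n)]
  set S : ℝ := ∑' k, a k with hS_def
  set M : ℝ≥0∞ := ENNReal.ofReal (Real.exp S) * eLpNorm ψ 2 μ with hM_def
  have hMlt : M < ⊤ := ENNReal.mul_lt_top ENNReal.ofReal_lt_top hL2
  have hbound : ∀ k, eLpNorm ψ (ENNReal.ofReal (p k)) μ ≤ M := by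
    intro k
    refine (hiterk k).trans (mul_le_mul_left ?_ _)
    exact ENNReal.ofReal_le_ofReal (Real.exp_le_exp.mpr
      (Summable.sum_le_tsum _ (fun i _ => hanonneg i) hsum))
  -- ess sup bound
  have hnull : ∀ ε : ℝ≥0∞, M < ε → ε ≠ ⊤ → μ {x | ε ≤ (‖ψ x‖₊ : ℝ≥0∞)} = 0 := by
    intro ε hMε hεtop
    by_contra hd
    set d : ℝ≥0∞ := μ {x | ε ≤ (‖ψ x‖₊ : ℝ≥0∞)} with hd_def
    have hdtop : d ≠ ⊤ := (measure_lt_top μ _).ne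
    have hkey : ∀ k, ε * d ^ (1 / p k) ≤ M := by
      intro k
      have hpk := hppos k
      have hne0 : ENNReal.ofReal (p k) ≠ 0 := by
        simp [ENNReal.ofReal_eq_zero, not_le, hpk]
      have htR : (ENNReal.ofReal (p k)).toReal = p k := ENNReal.toReal_ofReal hpk.le
      have hcheb := mul_meas_ge_le_pow_eLpNorm' μ hne0 ENNReal.ofReal_ne_top
        hmeas.aestronglyMeasurable (f := ψ) ε
      rw [htR] at hcheb
      have h3 : (ε ^ p k * d) ^ (1 / p k) ≤ (eLpNorm ψ (ENNReal.ofReal (p k)) μ ^ p k) ^ (1 / p k) :=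
        ENNReal.rpow_le_rpow hcheb (by positivity)
      rw [ENNReal.mul_rpow_of_nonneg _ _ (by positivity), ← ENNReal.rpow_mul,
        ← ENNReal.rpow_mul, mul_one_div_cancel hpk.ne', ENNReal.rpow_one, ENNReal.rpow_one] at h3
      exact h3.trans (hbound k)
    -- take the limit k → ∞
    have hdR : (0:ℝ) < d.toReal := ENNReal.toReal_pos hd hdtop
    have htend0 : Tendsto (fun k : ℕ => 1 / p k) atTop (nhds 0) := by
      have : (fun k : ℕ => 1 / p k) = fun k => (1/2) * β⁻¹ ^ k := by
        funext k; simp [hp_def, inv_pow]; ring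
      rw [this]
      simpa using (tendsto_pow_atTop_nhds_zero_of_lt_one (by positivity)
        (inv_lt_one_of_one_lt₀ hβ)).const_mul (1/2 : ℝ)
    have htendR : Tendsto (fun k : ℕ => d.toReal ^ (1 / p k)) atTop (nhds 1) := by
      have hc : ContinuousAt (fun y : ℝ => d.toReal ^ y) 0 :=
        Real.continuousAt_const_rpow hdR.ne'
      have := hc.tendsto.comp htend0
      simpa [Real.rpow_zero, Function.comp_def] using this
    have htendE : Tendsto (fun k : ℕ => d ^ (1 / p k)) atTop (nhds 1) := by
      have hrw : ∀ k, d ^ (1 / p k) = ENNReal.ofReal (d.toReal ^ (1 / p k)) := by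
        intro k
        rw [← ENNReal.ofReal_rpow_of_pos hdR, ENNReal.ofReal_toReal hdtop]
      simp only [hrw]
      have := (ENNReal.continuous_ofReal.tendsto _).comp htendR
      simpa [Function.comp_def] using this
    have htendM : Tendsto (fun k : ℕ => ε * d ^ (1 / p k)) atTop (nhds ε) := by
      have := ENNReal.Tendsto.const_mul (a := ε) htendE (Or.inl one_ne_zero)
      simpa using this
    have : ε ≤ M := le_of_tendsto htendM (Eventually.of_forall hkey)
    exact absurd hMε (not_lt.mpr this)
  have hae : ∀ᵐ x ∂μ, (‖ψ x‖₊ : ℝ≥0∞) ≤ M := by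
    have h1 : ∀ n : ℕ, ∀ᵐ x ∂μ, ¬ (M + ((n:ℝ≥0∞)+1)⁻¹ ≤ (‖ψ x‖₊ : ℝ≥0∞)) := by
      intro n
      have hne : ((n:ℝ≥0∞)+1)⁻¹ ≠ 0 := by
        simp [ENNReal.inv_ne_zero]
      have hlt : M < M + ((n:ℝ≥0∞)+1)⁻¹ := ENNReal.lt_add_right hMlt.ne hne
      have htop : M + ((n:ℝ≥0∞)+1)⁻¹ ≠ ⊤ := by
        refine ENNReal.add_ne_top.mpr ⟨hMlt.ne, ?_⟩
        simp [ENNReal.inv_ne_top]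
      exact (measure_eq_zero_iff_ae_notMem.mp (hnull _ hlt htop))
    rw [← MeasureTheory.ae_all_iff] at h1
    filter_upwards [h1] with x hx
    refine ENNReal.le_of_forall_pos_le_add fun ε hε _ => ?_
    obtain ⟨n, hn⟩ := ENNReal.exists_inv_nat_lt (show (ε:ℝ≥0∞) ≠ 0 by exact_mod_cast hε.ne')
    have h2 := not_le.mp (hx n)
    calc (‖ψ x‖₊ : ℝ≥0∞) ≤ M + ((n:ℝ≥0∞)+1)⁻¹ := h2.le
      _ ≤ M + ((n:ℝ≥0∞))⁻¹ := add_le_add_right (ENNReal.inv_le_inv.mpr le_self_add) _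
      _ ≤ M + ε := add_le_add_right hn.le _
  have hess : eLpNormEssSup ψ μ ≤ M := by
    rw [eLpNormEssSup]
    exact essSup_le_of_ae_le _ hae
  refine ⟨⟨hmeas.aestronglyMeasurable, ?_⟩, hsum, ?_⟩
  · rw [eLpNorm_exponent_top]
    exact lt_of_le_of_lt hess hMlt
  · rw [eLpNorm_exponent_top]
    exact hess
end

section
/- Let n ≥ 1 and let A be a real symmetric positive semidefinite (2n)×(2n) matrix, written in block form A = [[P, Q],[Qᵀ, R]] with n×n real blocks P, Q, R (P and R symmetric). Define the n×n complex matrix H = (1/4)(P + R + i(Q − Qᵀ)). Then H is Hermitian positive semidefinite and det H ≥ 2^{−n} (det A)^{1/2}; in particular det H is a nonnegative real number. -/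
open Matrix
open scoped ComplexOrder

section Aux

variable {m l : Type*} [Fintype m] [DecidableEq m] [Fintype l] [DecidableEq l]

/-- The determinant of a complex PSD matrix is a nonnegative real number. -/
lemma aux_psd_det_real {B : Matrix m m ℂ} (hB : B.PosSemidef) :
    ∃ r : ℝ, 0 ≤ r ∧ B.det = (r : ℂ) := by
  refine ⟨∏ i, hB.1.eigenvalues i, Finset.prod_nonneg fun i _ => hB.eigenvalues_nonneg i, ?_⟩
  rw [hB.1.det_eq_prod_eigenvalues]
  push_cast
  rfl

/-- A real PSD matrix has nonnegative determinant. -/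
lemma aux_real_psd_det_nonneg {A : Matrix m m ℝ} (hA : A.PosSemidef) : 0 ≤ A.det := by
  rw [hA.1.det_eq_prod_eigenvalues]
  refine Finset.prod_nonneg fun i _ => ?_
  simpa using hA.eigenvalues_nonneg i

/-- A PSD matrix with nonzero determinant is positive definite. -/
lemma aux_psd_posDef_of_det_ne_zero {B : Matrix m m ℂ} (hB : B.PosSemidef) (hd : B.det ≠ 0) :
    B.PosDef := by
  refine Matrix.PosDef.of_dotProduct_mulVec_pos hB.1 fun x hx => ?_
  have hinj := (Matrix.mulVec_injective_iff_isUnit (A := B)).mpr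
    ((Matrix.isUnit_iff_isUnit_det _).mpr hd.isUnit)
  have hBx : B *ᵥ x ≠ 0 := by
    intro h
    exact hx (hinj (by simpa using h))
  have h0 : star x ⬝ᵥ B *ᵥ x ≠ 0 := fun h => hBx ((hB.dotProduct_mulVec_zero_iff x).mp h)
  exact lt_of_le_of_ne (hB.dotProduct_mulVec_nonneg x) (Ne.symm h0)

/-- `det (1 + M) ≥ 1` for `M` PSD. -/
lemma aux_one_le_det_one_add {M : Matrix m m ℂ} (hM : M.PosSemidef) :
    ∃ r : ℝ, 1 ≤ r ∧ (1 + M).det = (r : ℂ) := by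
  have hB : (1 + M).IsHermitian := Matrix.isHermitian_one.add hM.1
  have key : ∀ i, 1 ≤ hB.eigenvalues i := by
    intro i
    set v : m → ℂ := ⇑(hB.eigenvectorBasis i) with hv
    have h1 : hB.eigenvalues i
        = Complex.re (star v ⬝ᵥ ((1 + M) *ᵥ v)) := hB.eigenvalues_eq i
    have hvv : star v ⬝ᵥ v = 1 := by
      have h := hB.eigenvectorBasis.orthonormal.1 i
      have h2 : (inner ℂ (hB.eigenvectorBasis i) (hB.eigenvectorBasis i) : ℂ) = 1 := by
        rw [inner_self_eq_norm_sq_to_K, h]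
        norm_num
      rw [EuclideanSpace.inner_eq_star_dotProduct, dotProduct_comm] at h2
      exact h2
    have h2 : star v ⬝ᵥ ((1 + M) *ᵥ v) = 1 + star v ⬝ᵥ (M *ᵥ v) := by
      rw [add_mulVec, dotProduct_add, one_mulVec, hvv]
    have h3 := hM.re_dotProduct_nonneg v
    rw [h1, h2]
    simp only [Complex.add_re, Complex.one_re]
    rw [RCLike.re_to_complex] at h3
    linarith [h3]
  refine ⟨∏ i, hB.eigenvalues i, ?_, ?_⟩
  · have := Finset.prod_le_prod (s := Finset.univ) (f := fun _ : m => (1:ℝ))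
      (g := hB.eigenvalues) (fun i _ => by norm_num) (fun i _ => key i)
    simpa using this
  · rw [hB.det_eq_prod_eigenvalues]; push_cast; rfl

open scoped MatrixOrder in
/-- Monotonicity of the determinant under adding a PSD matrix. -/
lemma aux_det_re_mono {S T : Matrix m m ℂ} (hS : S.PosSemidef) (hT : T.PosSemidef) :
    S.det.re ≤ (S + T).det.re := by
  by_cases hd : S.det = 0
  · obtain ⟨r, hr, he⟩ := aux_psd_det_real (hS.add hT)
    rw [hd, he]
    simpa using hr
  · set Sg := CFC.sqrt S with hSg
    have hSgSg : Sg * Sg = S := CFC.sqrt_mul_sqrt_self S hS.nonneg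
    have hSgdet : Sg.det ≠ 0 := by
      intro h
      apply hd
      rw [← hSgSg, det_mul, h, zero_mul]
    have hSgherm : Sg.IsHermitian := (CFC.sqrt_nonneg S).posSemidef.1
    have hSginvherm : (Sg⁻¹).IsHermitian := hSgherm.inv
    have hM : (Sg⁻¹ * T * Sg⁻¹).PosSemidef := by
      have := hT.mul_mul_conjTranspose_same Sg⁻¹
      rwa [hSginvherm.eq] at this
    have key : S + T = Sg * (1 + Sg⁻¹ * T * Sg⁻¹) * Sg := by
      rw [Matrix.mul_add, Matrix.mul_one, Matrix.add_mul, hSgSg]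
      congr 1
      rw [Matrix.mul_assoc, Matrix.mul_assoc, Matrix.nonsing_inv_mul _ hSgdet.isUnit,
        Matrix.mul_one, Matrix.mul_nonsing_inv_cancel_left _ _ hSgdet.isUnit]
    obtain ⟨r, hr, he⟩ := aux_one_le_det_one_add hM
    obtain ⟨s, hs, hse⟩ := aux_psd_det_real hS
    have : (S + T).det = ((s * r : ℝ) : ℂ) := by
      rw [key, det_mul, det_mul, mul_comm, ← mul_assoc, ← det_mul, hSgSg, he, hse]
      push_cast; ring
    rw [this, hse]
    simp only [Complex.ofReal_re]
    nlinarith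

/-- Fischer's inequality for a PSD block matrix. -/
lemma aux_fischer {X : Matrix m m ℂ} {Y : Matrix m l ℂ} {W : Matrix l l ℂ}
    (h : (fromBlocks X Y Yᴴ W).PosSemidef) :
    (fromBlocks X Y Yᴴ W).det.re ≤ X.det.re * W.det.re := by
  have hX : X.PosSemidef := by
    have := h.submatrix (Sum.inl : m → m ⊕ l)
    convert this using 1; ext i j; simp
  have hW : W.PosSemidef := by
    have := h.submatrix (Sum.inr : l → m ⊕ l)
    convert this using 1; ext i j; simp
  by_cases hd : X.det = 0
  · obtain ⟨x, hx0, hXx⟩ := (Matrix.exists_mulVec_eq_zero_iff (A := ℂ)).mpr hd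
    have hv0 : (Sum.elim x 0 : m ⊕ l → ℂ) ≠ 0 := by
      intro hc
      apply hx0
      funext i
      exact congrFun hc (Sum.inl i)
    have hquad : star (Sum.elim x 0) ⬝ᵥ ((fromBlocks X Y Yᴴ W) *ᵥ Sum.elim x 0) = 0 := by
      rw [fromBlocks_mulVec]
      simp [Function.star_sumElim, sumElim_dotProduct_sumElim, hXx]
    have hMv := (h.dotProduct_mulVec_zero_iff _).mp hquad
    have hdet : (fromBlocks X Y Yᴴ W).det = 0 :=
      (Matrix.exists_mulVec_eq_zero_iff (A := ℂ)).mp ⟨_, hv0, hMv⟩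
    rw [hdet, hd]
    simp
  · have hXpd : X.PosDef := aux_psd_posDef_of_det_ne_zero hX hd
    haveI : Invertible X := hXpd.isUnit.invertible
    have hS : (W - Yᴴ * X⁻¹ * Y).PosSemidef := (PosDef.fromBlocks₁₁ Y W hXpd).mp h
    have hT : (Yᴴ * X⁻¹ * Y).PosSemidef := hXpd.inv.posSemidef.conjTranspose_mul_mul_same Y
    have hdet := Matrix.det_fromBlocks₁₁ X Y Yᴴ W
    have hWeq : (W - Yᴴ * X⁻¹ * Y) + Yᴴ * X⁻¹ * Y = W := sub_add_cancel _ _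
    have hmono : (W - Yᴴ * X⁻¹ * Y).det.re ≤ W.det.re := by
      have := aux_det_re_mono hS hT
      rwa [hWeq] at this
    obtain ⟨s, hs, hse⟩ := aux_psd_det_real hS
    obtain ⟨x, hx, hxe⟩ := aux_psd_det_real hXpd.posSemidef
    have h1 : (fromBlocks X Y Yᴴ W).det = ((x * s : ℝ) : ℂ) := by
      rw [hdet, invOf_eq_nonsing_inv, hse, hxe]
      push_cast; ring
    rw [h1, hxe]
    simp only [Complex.ofReal_re]
    rw [hse] at hmono
    simp only [Complex.ofReal_re] at hmono
    exact mul_le_mul_of_nonneg_left hmono hx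

lemma aux_map_conjTranspose_real {M : Matrix m l ℝ} :
    (M.map Complex.ofReal)ᴴ = Mᵀ.map Complex.ofReal := by
  ext i j
  simp [Matrix.conjTranspose_apply, Matrix.map_apply, Complex.conj_ofReal]

lemma aux_map_mul_real {k : Type*} [Fintype l] (M : Matrix m l ℝ) (N : Matrix l k ℝ) :
    (M * N).map Complex.ofReal = (M.map Complex.ofReal) * (N.map Complex.ofReal) := by
  ext i j
  simp [Matrix.mul_apply, Matrix.map_apply]

open scoped MatrixOrder in
/-- Complexification of a real PSD matrix is PSD. -/
lemma aux_psd_map_complex {A : Matrix m m ℝ} (hA : A.PosSemidef) :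
    (A.map Complex.ofReal).PosSemidef := by
  obtain ⟨B, rfl⟩ : ∃ B : Matrix m m ℝ, A = Bᴴ * B :=
    ⟨CFC.sqrt A, by rw [(CFC.sqrt_nonneg A).posSemidef.1.eq, CFC.sqrt_mul_sqrt_self A hA.nonneg]⟩
  rw [aux_map_mul_real, show (Bᴴ : Matrix m m ℝ).map Complex.ofReal = (B.map Complex.ofReal)ᴴ by
    rw [aux_map_conjTranspose_real]; rfl]
  exact Matrix.posSemidef_conjTranspose_mul_self _

/-- Scaling a PSD matrix by a nonnegative real. -/
lemma aux_psd_smul {X : Matrix m m ℂ} (hX : X.PosSemidef) {c : ℝ} (hc : 0 ≤ c) :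
    (((c : ℂ)) • X).PosSemidef := by
  refine Matrix.PosSemidef.of_dotProduct_mulVec_nonneg ?_ ?_
  · rw [IsHermitian, conjTranspose_smul, hX.1.eq, Complex.star_def, Complex.conj_ofReal]
  · intro x
    rw [smul_mulVec, dotProduct_smul, smul_eq_mul]
    exact mul_nonneg (by rw [Complex.zero_le_real]; exact hc) (hX.dotProduct_mulVec_nonneg x)

end Aux

/-- Comparison between the determinants of the complex and real Hessians:
if the real symmetric `(2n)×(2n)` block matrix `A = [[P, Q],[Qᵀ, R]]` is positive
semidefinite, then the complex matrix `H = (1/4)(P + R + i(Q − Qᵀ))` is Hermitian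
positive semidefinite, its determinant is a nonnegative real number, and
`det H ≥ 2^{−n} (det A)^{1/2}`. -/
theorem complex_real_hessian_det_comparison (n : ℕ) (hn : 1 ≤ n)
    (P Q R : Matrix (Fin n) (Fin n) ℝ) (hP : P.IsSymm) (hR : R.IsSymm)
    (hA : (Matrix.fromBlocks P Q Qᵀ R).PosSemidef) :
    ((1 / 4 : ℂ) • ((P + R).map (Complex.ofReal) +
        Complex.I • ((Q - Qᵀ).map (Complex.ofReal)))).PosSemidef ∧
    ((1 / 4 : ℂ) • ((P + R).map (Complex.ofReal) +
        Complex.I • ((Q - Qᵀ).map (Complex.ofReal)))).det.im = 0 ∧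
    0 ≤ ((1 / 4 : ℂ) • ((P + R).map (Complex.ofReal) +
        Complex.I • ((Q - Qᵀ).map (Complex.ofReal)))).det.re ∧
    ((2 : ℝ) ^ n)⁻¹ * Real.sqrt (Matrix.fromBlocks P Q Qᵀ R).det ≤
      ((1 / 4 : ℂ) • ((P + R).map (Complex.ofReal) +
        Complex.I • ((Q - Qᵀ).map (Complex.ofReal)))).det.re := by
  set a := P.map Complex.ofReal with ha
  set b := Q.map Complex.ofReal with hb
  set d := R.map Complex.ofReal with hd
  set X : Matrix (Fin n) (Fin n) ℂ := a + d + Complex.I • (b - bᵀ) with hX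
  set G : Matrix (Fin n) (Fin n) ℂ := a - d - Complex.I • (b + bᵀ) with hG
  -- the Hermitian matrix in the statement is (1/4) • X
  have hHX : (P + R).map Complex.ofReal + Complex.I • ((Q - Qᵀ).map Complex.ofReal) = X := by
    rw [hX, ha, hb, hd]
    congr 1
    · ext i j; simp [Matrix.map_apply]
    · congr 1
      ext i j; simp [Matrix.map_apply]
  rw [hHX]
  set T : Matrix (Fin n ⊕ Fin n) (Fin n ⊕ Fin n) ℂ :=
    fromBlocks 1 1 (Complex.I • 1) (-Complex.I • 1) with hT
  have hTH : Tᴴ = fromBlocks 1 (-Complex.I • 1) 1 (Complex.I • 1) := by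
    simp [hT, fromBlocks_conjTranspose, conjTranspose_smul]
  have hAc : (fromBlocks P Q Qᵀ R).map Complex.ofReal = fromBlocks a b bᵀ d := by
    rw [fromBlocks_map, ha, hb, hd, Matrix.transpose_map]
  have hah : aᴴ = a := by rw [ha, aux_map_conjTranspose_real, hP.eq]
  have hdh : dᴴ = d := by rw [hd, aux_map_conjTranspose_real, hR.eq]
  have hbh : bᴴ = bᵀ := by rw [hb, aux_map_conjTranspose_real, Matrix.transpose_map]
  have hbth : (bᵀ)ᴴ = b := by
    ext i j
    simp [hb, Matrix.conjTranspose_apply, Matrix.map_apply, Complex.conj_ofReal]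
  have hat : aᵀ = a := by rw [ha, ← Matrix.transpose_map, hP.eq]
  have hdt : dᵀ = d := by rw [hd, ← Matrix.transpose_map, hR.eq]
  -- key block identity
  have hBeq : Tᴴ * ((fromBlocks P Q Qᵀ R).map Complex.ofReal) * T =
      fromBlocks X G Gᴴ Xᵀ := by
    rw [hAc, hTH, hT, fromBlocks_multiply, fromBlocks_multiply]
    have h21 : Gᴴ = a - d + Complex.I • (b + bᵀ) := by
      rw [hG]
      simp only [conjTranspose_sub, conjTranspose_smul, conjTranspose_add, hah, hdh, hbh, hbth,
        Complex.star_def, Complex.conj_I]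
      module
    have h22 : Xᵀ = a + d + Complex.I • (bᵀ - b) := by
      rw [hX]
      simp only [transpose_add, transpose_smul, transpose_sub, transpose_transpose, hat, hdt]
    rw [h21, h22, hX, hG, Matrix.fromBlocks_inj]
    refine ⟨?_, ?_, ?_, ?_⟩ <;>
    · simp only [Matrix.one_mul, Matrix.smul_mul, Matrix.mul_smul, Matrix.mul_one,
        Matrix.add_mul, Matrix.mul_neg, Matrix.neg_mul, smul_smul, neg_smul, neg_neg]
      match_scalars <;> simp [Complex.I_sq] <;> ring
  -- the big matrix is PSD
  have hBpsd : (fromBlocks X G Gᴴ Xᵀ).PosSemidef := by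
    rw [← hBeq]
    exact (aux_psd_map_complex hA).conjTranspose_mul_mul_same T
  -- X is PSD
  have hXpsd : X.PosSemidef := by
    have := hBpsd.submatrix (Sum.inl : Fin n → Fin n ⊕ Fin n)
    convert this using 1; ext i j; simp
  -- the Hessian matrix H = (1/4) X is PSD
  have hHpsd : ((1 / 4 : ℂ) • X).PosSemidef := by
    have := aux_psd_smul hXpsd (c := 1/4) (by norm_num)
    simpa using this
  refine ⟨hHpsd, ?_⟩
  obtain ⟨h, hh0, hhe⟩ := aux_psd_det_real hHpsd
  -- determinant computations
  have hdetT : T.det = ((-2) * Complex.I)^n := by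
    haveI : Invertible (1 : Matrix (Fin n) (Fin n) ℂ) := invertibleOne
    rw [hT, Matrix.det_fromBlocks₁₁]
    have h1 : (-Complex.I • (1 : Matrix (Fin n) (Fin n) ℂ)) - Complex.I • 1 * ⅟1 * 1
        = ((-2) * Complex.I) • 1 := by
      simp only [invOf_one, Matrix.mul_one]
      module
    rw [h1, Matrix.det_smul, Fintype.card_fin]
    simp
  have hstar : star T.det * T.det = (4:ℂ)^n := by
    rw [hdetT, star_pow, ← mul_pow]
    congr 1
    simp [Complex.star_def, Complex.conj_I]
    ring_nf
    simp [Complex.I_sq]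
  have hdetAc : ((fromBlocks P Q Qᵀ R).map Complex.ofReal).det
      = ((fromBlocks P Q Qᵀ R).det : ℂ) := by
    have := (RingHom.map_det Complex.ofRealHom (fromBlocks P Q Qᵀ R)).symm
    exact this
  have hdetB : (fromBlocks X G Gᴴ Xᵀ).det = (4:ℂ)^n * ((fromBlocks P Q Qᵀ R).det : ℂ) := by
    rw [← hBeq, det_mul, det_mul, det_conjTranspose, hdetAc, mul_comm, ← mul_assoc, ← hdetAc]
    rw [mul_comm (T.det) (star T.det), hstar, hdetAc]
  -- det X = 4^n * det H
  have hXH : X = (4:ℂ) • ((1 / 4 : ℂ) • X) := by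
    rw [smul_smul]; norm_num
  have hdetX : X.det = ((4:ℝ)^n * h : ℝ) := by
    rw [hXH, Matrix.det_smul, Fintype.card_fin, hhe]
    push_cast
    ring
  -- apply Fischer
  have hfis := aux_fischer hBpsd
  have hdetXt : (Xᵀ).det = X.det := Matrix.det_transpose X
  rw [hdetXt, hdetX, hdetB] at hfis
  have hAdet0 : 0 ≤ (fromBlocks P Q Qᵀ R).det := aux_real_psd_det_nonneg hA
  have hfis' : (4:ℝ)^n * (fromBlocks P Q Qᵀ R).det ≤ ((4:ℝ)^n * h) * ((4:ℝ)^n * h) := by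
    have e1 : ((4:ℂ)^n * ((fromBlocks P Q Qᵀ R).det : ℂ)).re
        = (4:ℝ)^n * (fromBlocks P Q Qᵀ R).det := by
      rw [show ((4:ℂ)^n) = (((4:ℝ)^n : ℝ) : ℂ) by push_cast; ring, ← Complex.ofReal_mul,
        Complex.ofReal_re]
    have e2 : ((((4:ℝ)^n * h : ℝ)) : ℂ).re = (4:ℝ)^n * h := Complex.ofReal_re _
    rw [e1, e2] at hfis
    exact hfis
  refine ⟨by rw [hhe]; simp, by rw [hhe]; simpa using hh0, ?_⟩
  rw [hhe]
  simp only [Complex.ofReal_re]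
  have h4 : (0:ℝ) < (4:ℝ)^n := by positivity
  have hkey : (fromBlocks P Q Qᵀ R).det ≤ ((2:ℝ)^n * h)^2 := by
    have h42 : ((2:ℝ)^n)^2 = (4:ℝ)^n := by
      rw [← pow_mul, mul_comm n 2, pow_mul]
      norm_num
    have hd2 : (4:ℝ)^n * (fromBlocks P Q Qᵀ R).det ≤ (4:ℝ)^n * ((4:ℝ)^n * h^2) := by
      nlinarith [hfis']
    have hfin := le_of_mul_le_mul_left hd2 h4
    calc (fromBlocks P Q Qᵀ R).det ≤ (4:ℝ)^n * h^2 := hfin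
      _ = ((2:ℝ)^n * h)^2 := by rw [mul_pow, h42]
  have hs := Real.sqrt_le_sqrt hkey
  rw [Real.sqrt_sq (by positivity)] at hs
  have h2n : (0:ℝ) < (2:ℝ)^n := by positivity
  calc ((2:ℝ)^n)⁻¹ * Real.sqrt (fromBlocks P Q Qᵀ R).det
      ≤ ((2:ℝ)^n)⁻¹ * ((2:ℝ)^n * h) := by
        exact mul_le_mul_of_nonneg_left hs (by positivity)
    _ = h := by field_simp
end

section
/- Let P ⊆ ℝⁿ be an open convex set, let E : P → ℝ be a concave differentiable function, let ψ₀ ∈ P, set μ₀ = ∇E(ψ₀), and let μ ∈ ℝⁿ. Suppose there exist ε ∈ (0,1) and φ_ε ∈ P with ∇E(φ_ε) = (μ − ε μ₀)/(1 − ε). Then there exists a constant C ≥ 0 such that for all φ ∈ P: ⟨φ, μ⟩ − E(φ) ≥ ε (⟨φ, μ₀⟩ − E(φ)) − C. -/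
open Set AffineMap

/-- Gradient inequality for concave functions: the graph lies below the tangent plane. -/
lemma concave_gradient_ineq {n : ℕ} {P : Set (EuclideanSpace ℝ (Fin n))}
    {E : EuclideanSpace ℝ (Fin n) → ℝ} (hconc : ConcaveOn ℝ P E)
    {x : EuclideanSpace ℝ (Fin n)} (hx : x ∈ P) (hd : DifferentiableAt ℝ E x)
    {y : EuclideanSpace ℝ (Fin n)} (hy : y ∈ P) :
    E y ≤ E x + (inner ℝ (gradient E x) (y - x) : ℝ) := by
  set c : ℝ →ᵃ[ℝ] EuclideanSpace ℝ (Fin n) := AffineMap.lineMap x y with hc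
  have hg : ConcaveOn ℝ (c ⁻¹' P) (E ∘ c) := hconc.comp_affineMap c
  have hc0 : c 0 = x := by simp [hc]
  have hc1 : c 1 = y := by simp [hc]
  have hcd : HasDerivAt c (y - x) 0 := by
    have : HasDerivAt (fun t : ℝ => t • (y - x) + x) ((1 : ℝ) • (y - x)) 0 :=
      ((hasDerivAt_id (0 : ℝ)).smul_const (y - x)).add_const x
    have he : (⇑c) = fun t : ℝ => t • (y - x) + x := by
      funext t; rw [hc, AffineMap.lineMap_apply_module']
    rw [he]; rwa [one_smul] at this
  have hEc : HasDerivAt (E ∘ c) ((inner ℝ (gradient E x) (y - x) : ℝ)) 0 := by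
    have hF : HasFDerivAt E ((InnerProductSpace.toDual ℝ _) (gradient E x)) x :=
      hd.hasGradientAt
    have hF' : HasFDerivAt E ((InnerProductSpace.toDual ℝ _) (gradient E x)) (c 0) := by
      rw [hc0]; exact hF
    simpa using hF'.comp_hasDerivAt (0 : ℝ) hcd
  have h0 : (0 : ℝ) ∈ c ⁻¹' P := by simp [hc0, hx]
  have h1 : (1 : ℝ) ∈ c ⁻¹' P := by simp [hc1, hy]
  have hslope := hg.slope_le_of_hasDerivAt h0 h1 one_pos hEc
  have hsl : slope (E ∘ c) 0 1 = E y - E x := by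
    simp [slope_def_field, hc0, hc1]
  rw [hsl] at hslope
  linarith

/-- Implication (1) ⟹ (2) of Lemma 3 in the finite-dimensional model of the
Berman–Boucksom–Guedj–Zeriahi variational method: if the nearby point
`μ_ε = (μ − εμ₀)/(1−ε)` is attained as a gradient value of the concave
differentiable function `E` (with `μ₀ = ∇E(ψ₀)`), then
`⟨φ,μ⟩ − E(φ) ≥ ε(⟨φ,μ₀⟩ − E(φ)) − C` on `P` for some constant `C ≥ 0`. -/
theorem coercivity_from_gradient_image {n : ℕ}
    (P : Set (EuclideanSpace ℝ (Fin n))) (hopen : IsOpen P) (hconv : Convex ℝ P)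
    (E : EuclideanSpace ℝ (Fin n) → ℝ) (hconc : ConcaveOn ℝ P E)
    (hdiff : ∀ φ ∈ P, DifferentiableAt ℝ E φ)
    (ψ₀ : EuclideanSpace ℝ (Fin n)) (hψ₀ : ψ₀ ∈ P)
    (μ μ₀ : EuclideanSpace ℝ (Fin n)) (hμ₀ : μ₀ = gradient E ψ₀)
    (ε : ℝ) (hε0 : 0 < ε) (hε1 : ε < 1)
    (φε : EuclideanSpace ℝ (Fin n)) (hφε : φε ∈ P)
    (hgrad : gradient E φε = (1 - ε)⁻¹ • (μ - ε • μ₀)) :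
    ∃ C : ℝ, 0 ≤ C ∧ ∀ φ ∈ P,
      ε * ((inner ℝ φ μ₀ : ℝ) - E φ) - C ≤ (inner ℝ φ μ : ℝ) - E φ := by
  set ν : EuclideanSpace ℝ (Fin n) := gradient E φε with hν
  have h1ε : (1 : ℝ) - ε ≠ 0 := by linarith
  have hμ : μ = (1 - ε) • ν + ε • μ₀ := by
    rw [hgrad, smul_inv_smul₀ h1ε]; abel
  set K : ℝ := (inner ℝ φε ν : ℝ) - E φε with hK
  refine ⟨max 0 (-((1 - ε) * K)), le_max_left _ _, fun φ hφ => ?_⟩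
  have hineq := concave_gradient_ineq hconc hφε (hdiff φε hφε) hφ
  rw [← hν, inner_sub_right] at hineq
  have hBK : K ≤ (inner ℝ φ ν : ℝ) - E φ := by
    have h1 : (inner ℝ ν φ : ℝ) = inner ℝ φ ν := real_inner_comm _ _
    have h2 : (inner ℝ ν φε : ℝ) = inner ℝ φε ν := real_inner_comm _ _
    rw [h1, h2] at hineq
    simp only [hK]; linarith
  have hsplit : (inner ℝ φ μ : ℝ) = (1 - ε) * (inner ℝ φ ν : ℝ) + ε * (inner ℝ φ μ₀ : ℝ) := by
    rw [hμ, inner_add_right, real_inner_smul_right, real_inner_smul_right]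
  have hCle : -((1 - ε) * K) ≤ max 0 (-((1 - ε) * K)) := le_max_right _ _
  rw [hsplit]
  nlinarith [hBK, hCle]
end

section
/- Let J : ℝⁿ → [0,∞) be a function whose sublevel sets {φ ∈ ℝⁿ : J(φ) ≤ c} are compact for every c ≥ 0, and suppose there exist real numbers p > 1 and C ≥ 1 such that J(tφ) ≤ C(t^p J(φ) + 1) for all t ∈ (0,1] and all φ ∈ ℝⁿ. Then for every linear map L : ℝⁿ → ℝ and every ε > 0 there exists C′ ≥ 0 such that |L(φ)| ≤ ε J(φ) + C′ for all φ ∈ ℝⁿ. -/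
/-- Lemma 5 ('quadratic growth implies coercivity') in the finite-dimensional model
of the Berman–Boucksom–Guedj–Zeriahi variational method: if `J : ℝⁿ → [0,∞)` has
compact sublevel sets and satisfies `J(tφ) ≤ C(t^p J(φ) + 1)` for all `t ∈ (0,1]`
with some `p > 1`, `C ≥ 1`, then every linear functional `L` satisfies
`|L(φ)| ≤ ε J(φ) + C′` for every `ε > 0` and a suitable `C′ ≥ 0`. -/
theorem power_growth_implies_coercivity {n : ℕ}
    (J : EuclideanSpace ℝ (Fin n) → ℝ)
    (hJ0 : ∀ φ, 0 ≤ J φ)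
    (hJcomp : ∀ c : ℝ, 0 ≤ c → IsCompact {φ | J φ ≤ c})
    (p C : ℝ) (hp : 1 < p) (hC : 1 ≤ C)
    (hgrowth : ∀ t : ℝ, 0 < t → t ≤ 1 → ∀ φ, J (t • φ) ≤ C * (t ^ p * J φ + 1)) :
    ∀ (L : EuclideanSpace ℝ (Fin n) →ₗ[ℝ] ℝ) (ε : ℝ), 0 < ε →
      ∃ C' : ℝ, 0 ≤ C' ∧ ∀ φ, |L φ| ≤ ε * J φ + C' := by
  intro L ε hε
  have hp0 : (0:ℝ) < p := lt_trans one_pos hp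
  have hLc : Continuous L := L.continuous_of_finiteDimensional
  -- bound of |L| on {J ≤ 2C}
  obtain ⟨M₀, hM₀⟩ := (hJcomp (2*C) (by linarith)).exists_bound_of_continuousOn
    hLc.continuousOn
  simp only [Real.norm_eq_abs] at hM₀
  set M : ℝ := max M₀ 0 with hMdef
  have hM : 0 ≤ M := le_max_right _ _
  have hMb : ∀ φ, J φ ≤ 2*C → |L φ| ≤ M := by
    intro φ hφ
    exact le_trans (hM₀ φ hφ) (le_max_left _ _)
  -- key claim
  have key : ∀ φ, 1 ≤ J φ → |L φ| ≤ M * (J φ) ^ (1/p) := by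
    intro φ hx
    set x := J φ with hxdef
    have hx0 : (0:ℝ) < x := lt_of_lt_of_le one_pos hx
    set t : ℝ := x ^ (-(1/p)) with htdef
    have ht0 : 0 < t := Real.rpow_pos_of_pos hx0 _
    have ht1 : t ≤ 1 := Real.rpow_le_one_of_one_le_of_nonpos hx
      (neg_nonpos.mpr (by positivity))
    have htp : t ^ p = x⁻¹ := by
      rw [htdef, ← Real.rpow_mul hx0.le]
      have : -(1/p) * p = -1 := by field_simp
      rw [this, Real.rpow_neg_one]
    have hJt : J (t • φ) ≤ 2*C := by
      have := hgrowth t ht0 ht1 φ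
      rw [htp] at this
      have hxx : x⁻¹ * x = 1 := inv_mul_cancel₀ hx0.ne'
      rw [← hxdef, hxx] at this
      linarith
    have hb := hMb _ hJt
    rw [map_smul, smul_eq_mul, abs_mul, abs_of_pos ht0] at hb
    have : |L φ| ≤ M / t := by
      rw [le_div_iff₀ ht0]; linarith [hb, mul_comm t |L φ|]
    calc |L φ| ≤ M / t := this
      _ = M * (x ^ (1/p)) := by
          rw [htdef, Real.rpow_neg hx0.le]
          have hxp : (0:ℝ) < x ^ (1/p) := Real.rpow_pos_of_pos hx0 _
          field_simp
  -- choose threshold R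
  have hexp : (0:ℝ) < 1 - 1/p := by
    have : 1/p < 1 := by rw [div_lt_one hp0]; exact hp
    linarith
  have htend := Filter.Tendsto.eventually_le_const (show (0:ℝ) < ε/(M+1) by positivity)
    (tendsto_rpow_neg_atTop hexp)
  obtain ⟨R, hR⟩ := (htend.and (Filter.eventually_ge_atTop (1:ℝ))).exists
  obtain ⟨hRsmall, hR1⟩ := hR
  have hR0 : (0:ℝ) < R := lt_of_lt_of_le one_pos hR1
  -- bound of |L| on {J ≤ R}
  obtain ⟨M₁, hM₁⟩ := (hJcomp R hR0.le).exists_bound_of_continuousOn hLc.continuousOn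
  simp only [Real.norm_eq_abs] at hM₁
  refine ⟨max M₁ 0, le_max_right _ _, fun φ => ?_⟩
  by_cases hcase : J φ ≤ R
  · have := le_trans (hM₁ φ hcase) (le_max_left M₁ 0)
    have hεJ : 0 ≤ ε * J φ := mul_nonneg hε.le (hJ0 φ)
    linarith
  · push_neg at hcase
    have hx1 : 1 ≤ J φ := le_trans hR1 hcase.le
    have hx0 : (0:ℝ) < J φ := lt_of_lt_of_le one_pos hx1
    have h1 := key φ hx1
    have hsplit : (J φ) ^ (1/p) = (J φ) ^ (-(1 - 1/p)) * J φ := by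
      nth_rewrite 3 [← Real.rpow_one (J φ)]
      rw [← Real.rpow_add hx0]
      congr 1
      ring
    have hmono : (J φ) ^ (-(1 - 1/p)) ≤ R ^ (-(1 - 1/p)) :=
      Real.rpow_le_rpow_of_nonpos hR0 hcase.le (by linarith)
    have hRs : R ^ (-(1 - 1/p)) ≤ ε/(M+1) := hRsmall
    have hM1 : (0:ℝ) < M + 1 := by linarith
    have : |L φ| ≤ M * ((ε/(M+1)) * J φ) := by
      calc |L φ| ≤ M * (J φ) ^ (1/p) := h1
        _ = M * ((J φ) ^ (-(1 - 1/p)) * J φ) := by rw [hsplit]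
        _ ≤ M * ((ε/(M+1)) * J φ) := by
            apply mul_le_mul_of_nonneg_left _ hM
            exact mul_le_mul_of_nonneg_right (le_trans hmono hRs) hx0.le
    have hfin : M * ((ε/(M+1)) * J φ) ≤ ε * J φ := by
      rw [show M * ((ε/(M+1)) * J φ) = (M/(M+1)) * (ε * J φ) by field_simp]
      have h1 : M/(M+1) ≤ 1 := by rw [div_le_one hM1]; linarith
      have h2 : 0 ≤ ε * J φ := mul_nonneg hε.le (hJ0 φ)
      nlinarith
    have : |L φ| ≤ ε * J φ := le_trans this hfin
    have : 0 ≤ max M₁ 0 := le_max_right _ _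
    linarith
end

section
/- Let n ≥ 1 be an integer and set q = (3/2)^{1/n}. Then for every real t with 0 < t < (q − 1)/2, one has ( q t + (1 − t)(1 − t²)^{1/n} )ⁿ ≥ 1 + (q − 1) t / 2. -/
set_option maxHeartbeats 1000000 in
/-- The key elementary inequality in the proof of Kolodziej's stability theorem for
complex Monge–Ampère equations: with `q = (3/2)^{1/n}`, for all `0 < t < (q−1)/2`,
`(qt + (1−t)(1−t²)^{1/n})ⁿ ≥ 1 + (q−1)t/2`. -/
theorem kolodziej_stability_inequality (n : ℕ) (hn : 1 ≤ n) (t : ℝ)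
    (ht : 0 < t) (ht' : t < (((3 / 2 : ℝ) ^ ((n : ℝ)⁻¹)) - 1) / 2) :
    1 + (((3 / 2 : ℝ) ^ ((n : ℝ)⁻¹)) - 1) * t / 2 ≤
      (((3 / 2 : ℝ) ^ ((n : ℝ)⁻¹)) * t + (1 - t) * (1 - t ^ 2) ^ ((n : ℝ)⁻¹)) ^ n := by
  have hn0 : (0:ℝ) < (n:ℝ) := by exact_mod_cast Nat.pos_of_ne_zero (by omega)
  obtain ⟨q, hqdef⟩ : ∃ q : ℝ, (3 / 2 : ℝ) ^ ((n : ℝ)⁻¹) = q := ⟨_, rfl⟩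
  rw [hqdef] at ht' ⊢
  have hq1 : 1 < q := by
    rw [← hqdef]
    rw [Real.one_lt_rpow_iff_of_pos (by norm_num)]
    exact Or.inl ⟨by norm_num, by positivity⟩
  have hq2 : q ≤ 3 / 2 := by
    rw [← hqdef]
    calc (3/2:ℝ) ^ ((n:ℝ)⁻¹) ≤ (3/2:ℝ) ^ (1:ℝ) := by
          apply Real.rpow_le_rpow_of_exponent_le (by norm_num)
          rw [inv_le_one_iff₀]; right; exact_mod_cast hn
      _ = 3/2 := Real.rpow_one _
  have ht4 : t < 1/4 := by nlinarith
  have h1t2 : (0:ℝ) < 1 - t^2 := by nlinarith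
  obtain ⟨s, hsdef⟩ : ∃ s : ℝ, (1 - t ^ 2) ^ ((n : ℝ)⁻¹) = s := ⟨_, rfl⟩
  rw [hsdef]
  have hs_pos : 0 < s := hsdef ▸ Real.rpow_pos_of_pos h1t2 _
  have hs_le1 : s ≤ 1 := by
    rw [← hsdef]
    apply Real.rpow_le_one h1t2.le (by nlinarith) (by positivity)
  have hsn : s ^ n = 1 - t ^ 2 := by
    rw [← hsdef]
    exact Real.rpow_inv_natCast_pow h1t2.le (by omega)
  obtain ⟨a, hadef⟩ : ∃ a : ℝ, q * t + (1 - t) * s = a := ⟨_, rfl⟩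
  rw [hadef]
  have has : s ≤ a := by
    have : a - s = t * (q - s) := by rw [← hadef]; ring
    nlinarith
  -- Bernoulli: a^n ≥ s^n * (1 + n * ((a-s)/s))
  have hr0 : 0 ≤ (a - s) / s := div_nonneg (by linarith) hs_pos.le
  have hbern : s ^ n * (1 + (n:ℝ) * ((a - s)/s)) ≤ a ^ n := by
    have h1 : (1 + (a - s)/s) ^ n ≥ 1 + (n:ℝ) * ((a - s)/s) := by
      have := one_add_mul_le_pow (a := (a - s)/s) (by linarith) n
      linarith
    have h2 : a = s * (1 + (a - s)/s) := by field_simp; ring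
    calc s ^ n * (1 + (n:ℝ) * ((a - s)/s))
        ≤ s ^ n * (1 + (a - s)/s) ^ n := by
          apply mul_le_mul_of_nonneg_left h1 (by positivity)
      _ = (s * (1 + (a - s)/s)) ^ n := (mul_pow _ _ _).symm
      _ = a ^ n := by rw [← h2]
  -- s^n * ((a-s)/s) ≥ s^n * (a - s) ≥ (1 - t^2) * t * (q - 1)
  have hkey : (1 - t^2) * (t * (q - 1)) ≤ s ^ n * ((a - s)/s) := by
    have h3 : s ^ n * (a - s) ≤ s ^ n * ((a - s)/s) := by
      have hle : a - s ≤ (a - s)/s := by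
        rw [le_div_iff₀ hs_pos]
        nlinarith [sub_nonneg.mpr has]
      exact mul_le_mul_of_nonneg_left hle (by positivity)
    have h4 : a - s = t * (q - s) := by rw [← hadef]; ring
    have h5 : t * (q - 1) ≤ a - s := by rw [h4]; nlinarith
    calc (1 - t^2) * (t * (q - 1)) = s ^ n * (t * (q-1)) := by rw [hsn]
      _ ≤ s ^ n * (a - s) := by
          apply mul_le_mul_of_nonneg_left h5 (by positivity)
      _ ≤ s ^ n * ((a - s)/s) := h3
  have hmain : (1 - t^2) + (n:ℝ) * ((1 - t^2) * (t * (q - 1))) ≤ a ^ n := by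
    have := mul_le_mul_of_nonneg_left hkey hn0.le
    calc (1 - t^2) + (n:ℝ) * ((1 - t^2) * (t * (q - 1)))
        ≤ (1 - t^2) + (n:ℝ) * (s ^ n * ((a - s)/s)) := by linarith
      _ = s ^ n * (1 + (n:ℝ) * ((a - s)/s)) := by rw [hsn]; ring
      _ ≤ a ^ n := hbern
  rcases eq_or_lt_of_le hn with h1 | h2
  · -- n = 1 : exact computation
    have hne : n = 1 := h1.symm
    subst hne
    have hq : q = 3/2 := by rw [← hqdef]; norm_num
    have hs1 : s = 1 - t^2 := by rw [← hsdef]; norm_num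
    rw [pow_one, ← hadef, hq, hs1]
    nlinarith [sq_nonneg (1/2 - t), ht.le]
  · -- n ≥ 2
    have hn2 : (2:ℝ) ≤ (n:ℝ) := by exact_mod_cast h2
    have hq' : (0:ℝ) < q - 1 := sub_pos.mpr hq1
    have hD : (0:ℝ) ≤ t * (q - 1) := (mul_pos ht hq').le
    have hA : (0:ℝ) ≤ ((n:ℝ) - 2) * ((1 - t^2) * (t * (q - 1))) :=
      mul_nonneg (by linarith) (mul_nonneg h1t2.le hD)
    have hB : (0:ℝ) < t * (q - 1) * (1/16 - t^2) :=
      mul_pos (mul_pos ht hq') (by nlinarith)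
    have hC : (0:ℝ) < t * ((q - 1)/2 - t) := mul_pos ht (by linarith)
    have : 1 + (q - 1) * t / 2 ≤ (1 - t^2) + (n:ℝ) * ((1 - t^2) * (t * (q - 1))) := by
      linarith [hA, hB, hC, hD]
    linarith
end

section
/- For t ≥ 0 define u_t : (0,1) → ℝ by u_t(x) = x log x + (1−x) log(1−x) + t|x − 1/2|, and define φ_t(ρ) = sup_{x∈(0,1)} ( ρx − u_t(x) ) for ρ ∈ ℝ. Then for every t ≥ 0 and every ρ ∈ ℝ: φ_t(ρ) = −t/2 + log(1 + e^{ρ+t}) if ρ ≤ −t; φ_t(ρ) = ρ/2 + log 2 if −t ≤ ρ ≤ t; and φ_t(ρ) = t/2 + log(1 + e^{ρ−t}) if ρ ≥ t. -/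
/-- The symplectic potential `u_t(x) = x log x + (1−x) log(1−x) + t|x − 1/2|` of the
geodesic ray on `ℂP¹` associated to the toric test configuration given by
`f(x) = |x − 1/2|`. -/
noncomputable def sympPot (t x : ℝ) : ℝ :=
  x * Real.log x + (1 - x) * Real.log (1 - x) + t * |x - 1 / 2|

/-- The Kähler potential `φ_t(ρ) = sup_{x∈(0,1)} ( ρx − u_t(x) )` recovered from the
symplectic potential by the Legendre transform. -/
noncomputable def kahlerPot (t ρ : ℝ) : ℝ :=
  sSup ((fun x => ρ * x - sympPot t x) '' Set.Ioo (0 : ℝ) 1)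

lemma ent_lb (x : ℝ) (hx0 : 0 < x) (hx1 : x < 1) :
    -Real.log 2 ≤ x * Real.log x + (1 - x) * Real.log (1 - x) := by
  have h1x : 0 < 1 - x := by linarith
  have h1 : Real.log (1 / (2 * x)) ≤ 1 / (2 * x) - 1 :=
    Real.log_le_sub_one_of_pos (by positivity)
  have h2 : Real.log (1 / (2 * (1 - x))) ≤ 1 / (2 * (1 - x)) - 1 :=
    Real.log_le_sub_one_of_pos (by positivity)
  have e1 : Real.log (1 / (2 * x)) = -(Real.log 2 + Real.log x) := by
    rw [one_div, Real.log_inv, Real.log_mul (by norm_num) hx0.ne']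
  have e2 : Real.log (1 / (2 * (1 - x))) = -(Real.log 2 + Real.log (1 - x)) := by
    rw [one_div, Real.log_inv, Real.log_mul (by norm_num) h1x.ne']
  rw [e1] at h1; rw [e2] at h2
  have m1 : x * (-(Real.log 2 + Real.log x)) ≤ x * (1 / (2 * x) - 1) :=
    mul_le_mul_of_nonneg_left h1 hx0.le
  have m2 : (1 - x) * (-(Real.log 2 + Real.log (1 - x))) ≤ (1 - x) * (1 / (2 * (1 - x)) - 1) :=
    mul_le_mul_of_nonneg_left h2 h1x.le
  have r1 : x * (1 / (2 * x) - 1) = 1 / 2 - x := by field_simp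
  have r2 : (1 - x) * (1 / (2 * (1 - x)) - 1) = 1 / 2 - (1 - x) := by field_simp
  rw [r1] at m1; rw [r2] at m2
  nlinarith [m1, m2]

lemma legendre_le (s x : ℝ) (hx0 : 0 < x) (hx1 : x < 1) :
    s * x - (x * Real.log x + (1 - x) * Real.log (1 - x)) ≤ Real.log (1 + Real.exp s) := by
  have hes : 0 < Real.exp s := Real.exp_pos s
  have hden : 0 < 1 + Real.exp s := by linarith
  have h1x : 0 < 1 - x := by linarith
  set a : ℝ := Real.exp s / (1 + Real.exp s) with ha
  have ha0 : 0 < a := div_pos hes hden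
  have ha1 : a < 1 := by rw [ha, div_lt_one hden]; linarith
  have hloga : Real.log a = s - Real.log (1 + Real.exp s) := by
    rw [ha, Real.log_div hes.ne' hden.ne', Real.log_exp]
  have h1a : 1 - a = 1 / (1 + Real.exp s) := by rw [ha]; field_simp; ring
  have hlog1a : Real.log (1 - a) = -Real.log (1 + Real.exp s) := by
    rw [h1a, one_div, Real.log_inv]
  have h1 : Real.log (a / x) ≤ a / x - 1 :=
    Real.log_le_sub_one_of_pos (by positivity)
  have h2 : Real.log ((1 - a) / (1 - x)) ≤ (1 - a) / (1 - x) - 1 :=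
    Real.log_le_sub_one_of_pos (div_pos (by linarith) h1x)
  rw [Real.log_div ha0.ne' hx0.ne'] at h1
  rw [Real.log_div (by linarith : (0:ℝ) < 1 - a).ne' h1x.ne'] at h2
  have m1 : x * (Real.log a - Real.log x) ≤ a - x := by
    have := mul_le_mul_of_nonneg_left h1 hx0.le
    calc x * (Real.log a - Real.log x) ≤ x * (a / x - 1) := this
      _ = a - x := by field_simp
  have m2 : (1 - x) * (Real.log (1 - a) - Real.log (1 - x)) ≤ (1 - a) - (1 - x) := by
    have := mul_le_mul_of_nonneg_left h2 h1x.le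
    calc (1 - x) * (Real.log (1 - a) - Real.log (1 - x)) ≤ (1 - x) * ((1 - a) / (1 - x) - 1) := this
      _ = (1 - a) - (1 - x) := by field_simp
  nlinarith [m1, m2, hloga, hlog1a]

lemma legendre_attain (s : ℝ) :
    s * (Real.exp s / (1 + Real.exp s)) -
      ((Real.exp s / (1 + Real.exp s)) * Real.log (Real.exp s / (1 + Real.exp s)) +
       (1 - Real.exp s / (1 + Real.exp s)) * Real.log (1 - Real.exp s / (1 + Real.exp s)))
      = Real.log (1 + Real.exp s) := by
  have hes : 0 < Real.exp s := Real.exp_pos s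
  have hden : 0 < 1 + Real.exp s := by linarith
  set a : ℝ := Real.exp s / (1 + Real.exp s) with ha
  have hloga : Real.log a = s - Real.log (1 + Real.exp s) := by
    rw [ha, Real.log_div hes.ne' hden.ne', Real.log_exp]
  have h1a : 1 - a = 1 / (1 + Real.exp s) := by rw [ha]; field_simp; ring
  have hlog1a : Real.log (1 - a) = -Real.log (1 + Real.exp s) := by
    rw [h1a, one_div, Real.log_inv]
  rw [hloga, hlog1a]; ring

lemma kahler_side (t ρ : ℝ) (ht : 0 ≤ t) (s : ℝ) (hs : s = ρ + t) (hsneg : s ≤ 0) :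
    kahlerPot t ρ = -t / 2 + Real.log (1 + Real.exp s) := by
  have hes : 0 < Real.exp s := Real.exp_pos s
  have hden : 0 < 1 + Real.exp s := by linarith
  set a : ℝ := Real.exp s / (1 + Real.exp s) with ha
  have ha0 : 0 < a := div_pos hes hden
  have ha1 : a < 1 := by rw [ha, div_lt_one hden]; linarith
  have hahalf : a ≤ 1 / 2 := by
    rw [ha, div_le_iff₀ hden]
    have := Real.exp_le_one_iff.2 hsneg
    linarith
  have habs : |a - 1 / 2| = 1 / 2 - a := by
    rw [abs_of_nonpos (by linarith)]; ring
  have hatt := legendre_attain s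
  rw [← ha] at hatt
  apply IsGreatest.csSup_eq
  constructor
  · refine ⟨a, ⟨ha0, ha1⟩, ?_⟩
    simp only [sympPot, habs]
    have hsa : s * a = ρ * a + t * a := by rw [hs]; ring
    linarith [hatt, hsa]
  · rintro y ⟨x, ⟨hx0, hx1⟩, rfl⟩
    have key := legendre_le s x hx0 hx1
    have habs2 : 1 / 2 - x ≤ |x - 1 / 2| := by
      have := neg_abs_le (x - 1 / 2); linarith
    have hmul : t * (1 / 2 - x) ≤ t * |x - 1 / 2| := mul_le_mul_of_nonneg_left habs2 ht
    simp only [sympPot]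
    have hsx : s * x = ρ * x + t * x := by rw [hs]; ring
    linarith [key, hmul, hsx]

lemma kahler_mid (t ρ : ℝ) (ht : 0 ≤ t) (h1 : -t ≤ ρ) (h2 : ρ ≤ t) :
    kahlerPot t ρ = ρ / 2 + Real.log 2 := by
  have hlog : Real.log (1 / 2 : ℝ) = -Real.log 2 := by
    rw [one_div, Real.log_inv]
  apply IsGreatest.csSup_eq
  constructor
  · refine ⟨1 / 2, ⟨by norm_num, by norm_num⟩, ?_⟩
    simp only [sympPot]
    rw [show (1:ℝ) - 1/2 = 1/2 by norm_num, hlog]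
    rw [show |(1:ℝ)/2 - 1/2| = 0 by norm_num]
    ring
  · rintro y ⟨x, ⟨hx0, hx1⟩, rfl⟩
    have hlb := ent_lb x hx0 hx1
    simp only [sympPot]
    rcases le_or_gt x (1 / 2) with hx | hx
    · have habs : |x - 1 / 2| = 1 / 2 - x := by
        rw [abs_of_nonpos (by linarith)]; ring
      rw [habs]
      nlinarith [mul_nonneg (by linarith : (0:ℝ) ≤ ρ + t) (by linarith : (0:ℝ) ≤ 1/2 - x)]
    · have habs : |x - 1 / 2| = x - 1 / 2 := abs_of_pos (by linarith)
      rw [habs]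
      nlinarith [mul_nonneg (by linarith : (0:ℝ) ≤ t - ρ) (by linarith : (0:ℝ) ≤ x - 1/2)]

lemma kahler_right (t ρ : ℝ) (ht : 0 ≤ t) (s : ℝ) (hs : s = ρ - t) (hspos : 0 ≤ s) :
    kahlerPot t ρ = t / 2 + Real.log (1 + Real.exp s) := by
  have hes : 0 < Real.exp s := Real.exp_pos s
  have hden : 0 < 1 + Real.exp s := by linarith
  set a : ℝ := Real.exp s / (1 + Real.exp s) with ha
  have ha0 : 0 < a := div_pos hes hden
  have ha1 : a < 1 := by rw [ha, div_lt_one hden]; linarith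
  have hahalf : 1 / 2 ≤ a := by
    rw [ha, le_div_iff₀ hden]
    have := Real.one_le_exp hspos
    linarith
  have habs : |a - 1 / 2| = a - 1 / 2 := abs_of_nonneg (by linarith)
  have hatt := legendre_attain s
  rw [← ha] at hatt
  apply IsGreatest.csSup_eq
  constructor
  · refine ⟨a, ⟨ha0, ha1⟩, ?_⟩
    simp only [sympPot, habs]
    have hsa : s * a = ρ * a - t * a := by rw [hs]; ring
    linarith [hatt, hsa]
  · rintro y ⟨x, ⟨hx0, hx1⟩, rfl⟩
    have key := legendre_le s x hx0 hx1
    have habs2 : x - 1 / 2 ≤ |x - 1 / 2| := le_abs_self _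
    have hmul : t * (x - 1 / 2) ≤ t * |x - 1 / 2| := mul_le_mul_of_nonneg_left habs2 ht
    simp only [sympPot]
    have hsx : s * x = ρ * x - t * x := by rw [hs]; ring
    linarith [key, hmul, hsx]

/-- Explicit piecewise formula for the toric geodesic ray on `ℂP¹`:
`φ_t(ρ) = −t/2 + log(1+e^{ρ+t})` for `ρ ≤ −t`, `φ_t(ρ) = ρ/2 + log 2` for
`−t ≤ ρ ≤ t`, and `φ_t(ρ) = t/2 + log(1+e^{ρ−t})` for `ρ ≥ t`. -/
theorem kahlerPot_piecewise_formula (t : ℝ) (ht : 0 ≤ t) (ρ : ℝ) :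
    (ρ ≤ -t → kahlerPot t ρ = -t / 2 + Real.log (1 + Real.exp (ρ + t))) ∧
    (-t ≤ ρ → ρ ≤ t → kahlerPot t ρ = ρ / 2 + Real.log 2) ∧
    (t ≤ ρ → kahlerPot t ρ = t / 2 + Real.log (1 + Real.exp (ρ - t))) := by
  refine ⟨fun h => ?_, fun h1 h2 => kahler_mid t ρ ht h1 h2, fun h => ?_⟩
  · exact kahler_side t ρ ht (ρ + t) rfl (by linarith)
  · exact kahler_right t ρ ht (ρ - t) rfl (by linarith)
end

section
/- For t ≥ 0 define u_t : (0,1) → ℝ by u_t(x) = x log x + (1−x) log(1−x) + t|x − 1/2|, and define φ_t(ρ) = sup_{x∈(0,1)} ( ρx − u_t(x) ) for ρ ∈ ℝ. Then for each fixed t > 0 the function φ_t is differentiable on ℝ with locally Lipschitz derivative, but φ_t is not twice differentiable at ρ = t: its derivative φ_t′ equals 1/2 on (−t, t) and equals e^{ρ−t}/(1 + e^{ρ−t}) on (t, ∞), so the left-hand derivative of φ_t′ at ρ = t equals 0 while the right-hand derivative equals 1/4. In particular φ_t is C^{1,1} but not C². -/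
open Real Set Filter
open scoped NNReal

noncomputable def sig (s : ℝ) : ℝ := Real.exp s / (1 + Real.exp s)

lemma one_add_exp_pos (s : ℝ) : 0 < 1 + Real.exp s := by positivity

lemma sig_mem (s : ℝ) : sig s ∈ Set.Ioo (0:ℝ) 1 := by
  constructor
  · exact div_pos (Real.exp_pos s) (one_add_exp_pos s)
  · rw [sig, div_lt_one (one_add_exp_pos s)]; linarith

lemma log_sig (s : ℝ) : Real.log (sig s) = s - Real.log (1 + Real.exp s) := by
  rw [sig, Real.log_div (Real.exp_ne_zero s) (ne_of_gt (one_add_exp_pos s)), Real.log_exp]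

lemma one_sub_sig (s : ℝ) : 1 - sig s = 1 / (1 + Real.exp s) := by
  rw [sig]; field_simp; ring

lemma log_one_sub_sig (s : ℝ) : Real.log (1 - sig s) = - Real.log (1 + Real.exp s) := by
  rw [one_sub_sig, one_div, Real.log_inv]

lemma sig_zero : sig 0 = 1/2 := by norm_num [sig]

lemma sig_le_half {s : ℝ} (hs : s ≤ 0) : sig s ≤ 1/2 := by
  have h1 : Real.exp s ≤ 1 := Real.exp_le_one_iff.mpr hs
  rw [sig, div_le_iff₀ (one_add_exp_pos s)]; linarith

lemma half_le_sig {s : ℝ} (hs : 0 ≤ s) : 1/2 ≤ sig s := by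
  have h1 : 1 ≤ Real.exp s := Real.one_le_exp hs
  rw [sig, le_div_iff₀ (one_add_exp_pos s)]; linarith

lemma fenchel {x : ℝ} (hx : x ∈ Set.Ioo (0:ℝ) 1) (s : ℝ) :
    s * x - (x * Real.log x + (1 - x) * Real.log (1 - x)) ≤ Real.log (1 + Real.exp s) := by
  obtain ⟨hx0, hx1⟩ := hx
  have hx1' : 0 < 1 - x := by linarith
  obtain ⟨hp0, hp1⟩ := sig_mem s
  have hp1' : 0 < 1 - sig s := by linarith
  have h1 : x * (Real.log (sig s) - Real.log x) ≤ sig s - x := by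
    calc x * (Real.log (sig s) - Real.log x) ≤ x * (sig s / x - 1) := by
          apply mul_le_mul_of_nonneg_left _ hx0.le
          have := Real.log_le_sub_one_of_pos (div_pos hp0 hx0)
          rwa [Real.log_div (ne_of_gt hp0) (ne_of_gt hx0)] at this
      _ = sig s - x := by field_simp
  have h2 : (1 - x) * (Real.log (1 - sig s) - Real.log (1 - x)) ≤ (1 - sig s) - (1 - x) := by
    calc (1 - x) * (Real.log (1 - sig s) - Real.log (1 - x))
        ≤ (1 - x) * ((1 - sig s) / (1 - x) - 1) := by
          apply mul_le_mul_of_nonneg_left _ hx1'.le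
          have := Real.log_le_sub_one_of_pos (div_pos hp1' hx1')
          rwa [Real.log_div (ne_of_gt hp1') (ne_of_gt hx1')] at this
      _ = (1 - sig s) - (1 - x) := by field_simp
  rw [log_sig] at h1
  rw [log_one_sub_sig] at h2
  nlinarith [h1, h2]

lemma fenchel_eq (s : ℝ) :
    s * sig s - (sig s * Real.log (sig s) + (1 - sig s) * Real.log (1 - sig s))
      = Real.log (1 + Real.exp s) := by
  rw [log_sig, log_one_sub_sig]; ring

lemma half_mem : (1/2 : ℝ) ∈ Set.Ioo (0:ℝ) 1 := by norm_num

lemma entropy_le {x : ℝ} (hx : x ∈ Set.Ioo (0:ℝ) 1) :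
    -(x * Real.log x + (1 - x) * Real.log (1 - x)) ≤ Real.log 2 := by
  have h := fenchel hx 0
  rw [Real.exp_zero] at h
  norm_num at h
  linarith

lemma amgm (s : ℝ) : s/2 + Real.log 2 ≤ Real.log (1 + Real.exp s) := by
  have h := fenchel half_mem s
  have h2 : Real.log (1/2 : ℝ) = -Real.log 2 := by rw [one_div, Real.log_inv]
  norm_num [h2] at h
  linarith

noncomputable def phiP (t ρ : ℝ) : ℝ :=
  if ρ ≤ -t then -t/2 + Real.log (1 + Real.exp (ρ + t))
  else if ρ ≤ t then ρ/2 + Real.log 2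
  else t/2 + Real.log (1 + Real.exp (ρ - t))

noncomputable def gFun (t ρ : ℝ) : ℝ :=
  if ρ ≤ -t then sig (ρ + t)
  else if ρ ≤ t then 1/2
  else sig (ρ - t)

lemma kahler_eq (t : ℝ) (ht : 0 < t) (ρ : ℝ) : kahlerPot t ρ = phiP t ρ := by
  apply IsGreatest.csSup_eq
  constructor
  · -- phiP is attained
    by_cases h1 : ρ ≤ -t
    · refine ⟨sig (ρ + t), sig_mem _, ?_⟩
      have hle : sig (ρ + t) ≤ 1/2 := sig_le_half (by linarith)
      have fe := fenchel_eq (ρ + t)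
      simp only [sympPot, phiP, if_pos h1]
      rw [abs_of_nonpos (by linarith : sig (ρ+t) - 1/2 ≤ 0)]
      nlinarith [fe]
    · push_neg at h1
      by_cases h2 : ρ ≤ t
      · refine ⟨1/2, half_mem, ?_⟩
        simp only [sympPot, phiP, if_neg (not_le.mpr h1), if_pos h2]
        have h3 : Real.log (1/2 : ℝ) = -Real.log 2 := by rw [one_div, Real.log_inv]
        norm_num [h3]
        ring
      · push_neg at h2
        refine ⟨sig (ρ - t), sig_mem _, ?_⟩
        have hle : 1/2 ≤ sig (ρ - t) := half_le_sig (by linarith)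
        have fe := fenchel_eq (ρ - t)
        simp only [sympPot, phiP, if_neg h1.not_ge, if_neg (not_le.mpr h2)]
        rw [abs_of_nonneg (by linarith : (0:ℝ) ≤ sig (ρ-t) - 1/2)]
        nlinarith [fe]
  · rintro y ⟨x, hx, rfl⟩
    obtain ⟨hx0, hx1⟩ := hx
    simp only [sympPot, phiP]
    rcases le_total x (1/2) with hx2 | hx2
    · rw [abs_of_nonpos (by linarith : x - 1/2 ≤ 0)]
      split_ifs with h1 h2
      · nlinarith [fenchel ⟨hx0, hx1⟩ (ρ + t)]
      · push_neg at h1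
        have h4 : (ρ + t) * x ≤ (ρ + t) * (1/2) :=
          mul_le_mul_of_nonneg_left hx2 (by linarith)
        nlinarith [entropy_le ⟨hx0, hx1⟩, h4]
      · push_neg at h1 h2
        have h4 : (ρ + t) * x ≤ (ρ + t) * (1/2) :=
          mul_le_mul_of_nonneg_left hx2 (by linarith)
        nlinarith [entropy_le ⟨hx0, hx1⟩, h4, amgm (ρ - t)]
    · rw [abs_of_nonneg (by linarith : (0:ℝ) ≤ x - 1/2)]
      split_ifs with h1 h2
      · have h4 : (ρ - t) * x ≤ (ρ - t) * (1/2) :=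
          mul_le_mul_of_nonpos_left hx2 (by linarith)
        nlinarith [entropy_le ⟨hx0, hx1⟩, h4, amgm (ρ + t)]
      · push_neg at h1
        have h4 : (ρ - t) * x ≤ (ρ - t) * (1/2) :=
          mul_le_mul_of_nonpos_left hx2 (by linarith)
        nlinarith [entropy_le ⟨hx0, hx1⟩, h4]
      · push_neg at h1 h2
        nlinarith [fenchel ⟨hx0, hx1⟩ (ρ - t)]

lemma hasDerivAt_B1 (t ρ : ℝ) :
    HasDerivAt (fun ρ => -t/2 + Real.log (1 + Real.exp (ρ + t))) (sig (ρ + t)) ρ := by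
  have h1 : HasDerivAt (fun ρ : ℝ => ρ + t) 1 ρ := (hasDerivAt_id ρ).add_const t
  have h2 : HasDerivAt (fun ρ : ℝ => Real.exp (ρ + t)) (Real.exp (ρ + t)) ρ := by
    simpa using h1.exp
  have h3 : HasDerivAt (fun ρ : ℝ => 1 + Real.exp (ρ + t)) (Real.exp (ρ + t)) ρ :=
    h2.const_add 1
  have h4 := h3.log (ne_of_gt (one_add_exp_pos _))
  simpa [sig] using h4.const_add (-t/2)

lemma hasDerivAt_B3 (t ρ : ℝ) :
    HasDerivAt (fun ρ => t/2 + Real.log (1 + Real.exp (ρ - t))) (sig (ρ - t)) ρ := by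
  have h1 : HasDerivAt (fun ρ : ℝ => ρ - t) 1 ρ := (hasDerivAt_id ρ).sub_const t
  have h2 : HasDerivAt (fun ρ : ℝ => Real.exp (ρ - t)) (Real.exp (ρ - t)) ρ := by
    simpa using h1.exp
  have h3 : HasDerivAt (fun ρ : ℝ => 1 + Real.exp (ρ - t)) (Real.exp (ρ - t)) ρ :=
    h2.const_add 1
  have h4 := h3.log (ne_of_gt (one_add_exp_pos _))
  simpa [sig] using h4.const_add (t/2)

lemma hasDerivAt_B2 (ρ : ℝ) :
    HasDerivAt (fun ρ : ℝ => ρ/2 + Real.log 2) (1/2) ρ := by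
  simpa using ((hasDerivAt_id ρ).div_const 2).add_const (Real.log 2)


lemma hasDerivAt_phiP (t : ℝ) (ht : 0 < t) (ρ : ℝ) :
    HasDerivAt (phiP t) (gFun t ρ) ρ := by
  rcases lt_trichotomy ρ (-t) with h | h | h
  · rw [gFun, if_pos h.le]
    refine (hasDerivAt_B1 t ρ).congr_of_eventuallyEq ?_
    filter_upwards [Iio_mem_nhds h] with y (hy : y < -t)
    simp [phiP, hy.le]
  · subst h
    have hsig0 : sig (-t + t) = 1/2 := by rw [neg_add_cancel, sig_zero]
    have hval : phiP t (-t) = -t/2 + Real.log 2 := by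
      simp [phiP, Real.exp_zero]
      norm_num
    have hL : HasDerivWithinAt (phiP t) (1/2) (Iic (-t)) (-t) := by
      have h5 := (hasDerivAt_B1 t (-t)).hasDerivWithinAt (s := Iic (-t))
      rw [hsig0] at h5
      refine h5.congr (fun y hy => by simp only [phiP]; rw [if_pos (Set.mem_Iic.mp hy)])
        (by simp only [phiP]; rw [if_pos (le_refl (-t))])
    have hR : HasDerivWithinAt (phiP t) (1/2) (Ici (-t)) (-t) := by
      refine (hasDerivAt_B2 (-t)).hasDerivWithinAt.congr_of_eventuallyEq ?_ ?_
      · filter_upwards [mem_nhdsWithin_of_mem_nhds (Iio_mem_nhds (show -t < t by linarith)),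
          self_mem_nhdsWithin] with y (hy1 : y < t) (hy2 : y ∈ Ici (-t))
        rcases eq_or_lt_of_le (Set.mem_Ici.mp hy2) with h6 | h6
        · rw [← h6, hval]
        · simp [phiP, not_le.mpr h6, hy1.le]
      · rw [hval]
    have hU := hL.union hR
    rw [Iic_union_Ici, hasDerivWithinAt_univ] at hU
    rw [gFun, if_pos le_rfl, hsig0]
    exact hU
  · rcases lt_trichotomy ρ t with h2 | h2 | h2
    · rw [gFun, if_neg (not_le.mpr h), if_pos h2.le]
      refine (hasDerivAt_B2 ρ).congr_of_eventuallyEq ?_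
      filter_upwards [Ioo_mem_nhds h h2] with y hy
      simp [phiP, not_le.mpr hy.1, hy.2.le]
    · subst h2
      have hval : phiP ρ ρ = ρ/2 + Real.log 2 := by
        simp [phiP, not_le.mpr h]
      have hL : HasDerivWithinAt (phiP ρ) (1/2) (Iic ρ) ρ := by
        refine (hasDerivAt_B2 ρ).hasDerivWithinAt.congr_of_eventuallyEq ?_ hval
        filter_upwards [mem_nhdsWithin_of_mem_nhds (Ioi_mem_nhds h), self_mem_nhdsWithin]
          with y (hy1 : -ρ < y) (hy2 : y ∈ Iic ρ)
        simp only [phiP]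
        rw [if_neg (not_le.mpr hy1), if_pos (Set.mem_Iic.mp hy2)]
      have hR : HasDerivWithinAt (phiP ρ) (1/2) (Ici ρ) ρ := by
        have h5 := (hasDerivAt_B3 ρ ρ).hasDerivWithinAt (s := Ici ρ)
        rw [show sig (ρ - ρ) = 1/2 by rw [sub_self, sig_zero]] at h5
        refine h5.congr ?_ ?_
        · intro y hy
          rcases eq_or_lt_of_le (Set.mem_Ici.mp hy) with h6 | h6
          · rw [← h6, hval]
            simp [Real.exp_zero]
            norm_num
          · simp [phiP, not_le.mpr h6, not_le.mpr (show -ρ < y by linarith)]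
        · rw [hval]
          simp [Real.exp_zero]
          norm_num
      have hU := hL.union hR
      rw [Iic_union_Ici, hasDerivWithinAt_univ] at hU
      rw [gFun, if_neg (not_le.mpr h), if_pos le_rfl]
      exact hU
    · rw [gFun, if_neg (by push_neg; linarith), if_neg (not_le.mpr h2)]
      refine (hasDerivAt_B3 t ρ).congr_of_eventuallyEq ?_
      filter_upwards [Ioi_mem_nhds h2] with y (hy : t < y)
      simp [phiP, not_le.mpr hy, not_le.mpr (show -t < y by linarith)]

lemma hasDerivAt_sig (s : ℝ) :
    HasDerivAt sig (Real.exp s / (1 + Real.exp s)^2) s := by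
  have h1 : HasDerivAt (fun s : ℝ => 1 + Real.exp s) (Real.exp s) s :=
    (Real.hasDerivAt_exp s).const_add 1
  have h2 := (Real.hasDerivAt_exp s).div h1 (ne_of_gt (one_add_exp_pos s))
  refine HasDerivAt.congr_deriv (f := sig) h2 ?_
  have := one_add_exp_pos s
  ring

lemma sig_lipschitz : LipschitzWith (1/4) sig := by
  apply lipschitzWith_of_nnnorm_deriv_le (fun s => (hasDerivAt_sig s).differentiableAt)
  intro s
  rw [(hasDerivAt_sig s).deriv]
  rw [← NNReal.coe_le_coe, coe_nnnorm, Real.norm_eq_abs,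
    abs_of_nonneg (by positivity)]
  push_cast
  rw [div_le_iff₀ (by positivity)]
  nlinarith [Real.exp_pos s, sq_nonneg (1 - Real.exp s)]

lemma clamp_lipschitz (t : ℝ) :
    LipschitzWith 2 (fun ρ : ℝ => max (ρ - t) 0 + min (ρ + t) 0) := by
  apply LipschitzWith.of_dist_le_mul
  intro x y
  simp only [Real.dist_eq]
  have h1 : |max (x - t) 0 - max (y - t) 0| ≤ |x - y| := by
    have := abs_max_sub_max_le_abs (x - t) (y - t) 0
    simpa using this
  have h2 : |min (x + t) 0 - min (y + t) 0| ≤ |x - y| := by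
    have := abs_min_sub_min_le_max (x + t) 0 (y + t) 0
    simpa using this
  have e : (max (x - t) 0 + min (x + t) 0) - (max (y - t) 0 + min (y + t) 0)
      = (max (x - t) 0 - max (y - t) 0) + (min (x + t) 0 - min (y + t) 0) := by ring
  rw [e]
  have h3 := abs_add_le (max (x - t) 0 - max (y - t) 0) (min (x + t) 0 - min (y + t) 0)
  have h4 : ((2 : ℝ≥0) : ℝ) = 2 := by norm_num
  rw [h4]
  linarith

lemma gFun_eq_comp (t : ℝ) (ht : 0 < t) :
    gFun t = sig ∘ (fun ρ : ℝ => max (ρ - t) 0 + min (ρ + t) 0) := by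
  funext ρ
  simp only [gFun, Function.comp]
  split_ifs with h1 h2
  · have e : max (ρ - t) 0 + min (ρ + t) 0 = ρ + t := by
      rw [max_eq_right (by linarith), min_eq_left (by linarith)]; ring
    rw [e]
  · have e : max (ρ - t) 0 + min (ρ + t) 0 = 0 := by
      rw [max_eq_right (by linarith), min_eq_right (by linarith)]; ring
    rw [e, sig_zero]
  · have e : max (ρ - t) 0 + min (ρ + t) 0 = ρ - t := by
      rw [max_eq_left (by linarith), min_eq_right (by linarith)]; ring
    rw [e]

lemma gFun_locallyLipschitz (t : ℝ) (ht : 0 < t) : LocallyLipschitz (gFun t) := by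
  rw [gFun_eq_comp t ht]
  exact (sig_lipschitz.comp (clamp_lipschitz t)).locallyLipschitz

/-- The toric geodesic ray on `ℂP¹` is `C^{1,1}` but not `C²`: for each `t > 0`,
`φ_t` is differentiable with locally Lipschitz derivative; `φ_t′ = 1/2` on `(−t,t)`
and `φ_t′(ρ) = e^{ρ−t}/(1+e^{ρ−t})` on `(t,∞)`; the left-hand derivative of `φ_t′`
at `ρ = t` is `0` while the right-hand derivative is `1/4`; in particular `φ_t` is
not twice differentiable at `ρ = t` and not `C²`. -/
theorem kahlerPot_C11_not_C2 (t : ℝ) (ht : 0 < t) :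
    (∀ ρ : ℝ, DifferentiableAt ℝ (kahlerPot t) ρ) ∧
    LocallyLipschitz (deriv (kahlerPot t)) ∧
    (∀ ρ ∈ Set.Ioo (-t) t, deriv (kahlerPot t) ρ = 1 / 2) ∧
    (∀ ρ ∈ Set.Ioi t, deriv (kahlerPot t) ρ = Real.exp (ρ - t) / (1 + Real.exp (ρ - t))) ∧
    HasDerivWithinAt (deriv (kahlerPot t)) 0 (Set.Iic t) t ∧
    HasDerivWithinAt (deriv (kahlerPot t)) (1 / 4) (Set.Ici t) t ∧
    ¬ DifferentiableAt ℝ (deriv (kahlerPot t)) t ∧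
    ¬ ContDiff ℝ 2 (kahlerPot t) := by
  have hkp : kahlerPot t = phiP t := funext (kahler_eq t ht)
  have hd : ∀ ρ, HasDerivAt (kahlerPot t) (gFun t ρ) ρ := by
    rw [hkp]; exact hasDerivAt_phiP t ht
  have hderiv : deriv (kahlerPot t) = gFun t := funext fun ρ => (hd ρ).deriv
  -- left-hand second derivative
  have hL0 : HasDerivWithinAt (gFun t) 0 (Set.Iic t) t := by
    refine (hasDerivWithinAt_const t (Set.Iic t) (1/2 : ℝ)).congr_of_eventuallyEq ?_ ?_
    · filter_upwards [mem_nhdsWithin_of_mem_nhds (Ioi_mem_nhds (show -t < t by linarith)),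
        self_mem_nhdsWithin] with y (hy1 : -t < y) (hy2 : y ∈ Set.Iic t)
      simp only [gFun]
      rw [if_neg (not_le.mpr hy1), if_pos (Set.mem_Iic.mp hy2)]
    · simp only [gFun]
      rw [if_neg (by push_neg; linarith), if_pos le_rfl]
  -- right-hand second derivative
  have hR0 : HasDerivWithinAt (gFun t) (1/4) (Set.Ici t) t := by
    have hcomp : HasDerivAt (fun ρ => sig (ρ - t)) (1/4) t := by
      have h2 : HasDerivAt (fun ρ : ℝ => Real.exp (ρ - t)) (Real.exp (t - t)) t := by
        simpa using ((hasDerivAt_id t).sub_const t).exp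
      have h3 : HasDerivAt (fun ρ : ℝ => 1 + Real.exp (ρ - t)) (Real.exp (t - t)) t :=
        h2.const_add 1
      have h4 := h2.div h3 (by positivity)
      have e : (Real.exp (t - t) * (1 + Real.exp (t - t)) -
          Real.exp (t - t) * Real.exp (t - t)) / (1 + Real.exp (t - t)) ^ 2 = 1/4 := by
        rw [sub_self, Real.exp_zero]; norm_num
      rw [e] at h4
      exact h4.congr_of_eventuallyEq (Eventually.of_forall fun y => rfl)
    refine hcomp.hasDerivWithinAt.congr ?_ ?_
    · intro y hy
      rcases eq_or_lt_of_le (Set.mem_Ici.mp hy) with h6 | h6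
      · rw [← h6]
        simp only [gFun]
        rw [if_neg (by push_neg; linarith), if_pos le_rfl, sub_self, sig_zero]
      · simp only [gFun]
        rw [if_neg (by push_neg; linarith), if_neg (not_le.mpr h6)]
    · simp only [gFun]
      rw [if_neg (by push_neg; linarith), if_pos le_rfl, sub_self, sig_zero]
  have hnd : ¬ DifferentiableAt ℝ (gFun t) t := by
    intro hdiff
    have h1 := hdiff.hasDerivAt.hasDerivWithinAt (s := Set.Iic t)
    have h2 := hdiff.hasDerivAt.hasDerivWithinAt (s := Set.Ici t)
    have u1 : UniqueDiffWithinAt ℝ (Set.Iic t) t := uniqueDiffOn_Iic t t Set.self_mem_Iic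
    have u2 : UniqueDiffWithinAt ℝ (Set.Ici t) t := uniqueDiffOn_Ici t t Set.self_mem_Ici
    have e1 : deriv (gFun t) t = 0 := by
      rw [← h1.derivWithin u1, hL0.derivWithin u1]
    have e2 : deriv (gFun t) t = 1/4 := by
      rw [← h2.derivWithin u2, hR0.derivWithin u2]
    rw [e1] at e2
    norm_num at e2
  refine ⟨fun ρ => (hd ρ).differentiableAt, ?_, ?_, ?_, ?_, ?_, ?_, ?_⟩
  · rw [hderiv]; exact gFun_locallyLipschitz t ht
  · intro ρ hρ
    rw [hderiv]
    simp only [gFun]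
    rw [if_neg (not_le.mpr hρ.1), if_pos hρ.2.le]
  · intro ρ hρ
    rw [hderiv]
    simp only [gFun]
    rw [if_neg (by push_neg; linarith [Set.mem_Ioi.mp hρ]), if_neg (not_le.mpr hρ)]
    rfl
  · rw [hderiv]; exact hL0
  · rw [hderiv]; exact hR0
  · rw [hderiv]; exact hnd
  · intro hc
    rw [show (2 : WithTop ℕ∞) = 1 + 1 by norm_num] at hc
    have := (contDiff_succ_iff_deriv.mp hc).2.2.differentiable one_ne_zero t
    rw [hderiv] at this
    exact hnd this
end

section
/- Let X be a compact topological space and let φ : X → ℝ be any function. For each integer j ≥ 1 let (ψ_{j,k})_{k ≥ 1} be a sequence of continuous real-valued functions on X that is non-increasing in k and converges pointwise, as k → ∞, to max(φ, −j). Then there exists a strictly increasing sequence of indices (k_j) such that, setting φ̃_j = ψ_{j,k_j} + 2^{−j}, one has φ̃_{j+1}(x) ≤ φ̃_j(x) for all x ∈ X and all j ≥ 1, and φ̃_j(x) → φ(x) as j → ∞ for every x ∈ X. -/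
open Filter

/-- Diagonal extraction lemma (Blocki–Kolodziej) behind the approximation theorem for
`ω₀`-plurisubharmonic functions: if for each `j ≥ 1` the continuous functions
`ψ_{j,k}` decrease in `k` to `max(φ, −j)` pointwise on a compact space `X`, then one
can select a strictly increasing sequence of indices `k_j` so that
`φ̃_j = ψ_{j,k_j} + 2^{−j}` is non-increasing in `j` and converges pointwise to `φ`. -/
theorem diagonal_extraction_decreasing_approximation
    {X : Type*} [TopologicalSpace X] [CompactSpace X] (φ : X → ℝ)
    (ψ : ℕ → ℕ → X → ℝ)
    (hcont : ∀ j, 1 ≤ j → ∀ k, 1 ≤ k → Continuous (ψ j k))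
    (hanti : ∀ j, 1 ≤ j → ∀ x : X, ∀ k l : ℕ, 1 ≤ k → k ≤ l → ψ j l x ≤ ψ j k x)
    (hlim : ∀ j, 1 ≤ j → ∀ x : X,
      Tendsto (fun k => ψ j k x) atTop (nhds (max (φ x) (-(j : ℝ))))) :
    ∃ k : ℕ → ℕ, StrictMono k ∧ (∀ j, 1 ≤ j → 1 ≤ k j) ∧
      (∀ j, 1 ≤ j → ∀ x : X,
        ψ (j + 1) (k (j + 1)) x + ((2 : ℝ) ^ (j + 1))⁻¹ ≤ ψ j (k j) x + ((2 : ℝ) ^ j)⁻¹) ∧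
      (∀ x : X, Tendsto (fun j => ψ j (k j) x + ((2 : ℝ) ^ j)⁻¹) atTop (nhds (φ x))) := by
  classical
  -- the approximants lie above the limit function
  have hlb : ∀ j : ℕ, 1 ≤ j → ∀ k, 1 ≤ k → ∀ x, max (φ x) (-(j : ℝ)) ≤ ψ j k x := by
    intro j hj k hk x
    refine le_of_tendsto (hlim j hj x) ?_
    filter_upwards [eventually_ge_atTop k] with m hm
    exact hanti j hj x k m hk hm
  -- Dini-type lemma via compactness
  have dini : ∀ j : ℕ, 1 ≤ j → ∀ g : X → ℝ, Continuous g →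
      (∀ x, max (φ x) (-(j : ℝ)) < g x) → ∃ K, 1 ≤ K ∧ ∀ x, ψ j K x < g x := by
    intro j hj g hg hlt
    set U : ℕ → Set X := fun n => {x : X | ψ j (n + 1) x < g x} with hU
    have hopen : ∀ n, IsOpen (U n) := fun n =>
      isOpen_lt (hcont j hj (n + 1) (Nat.succ_le_succ (Nat.zero_le n))) hg
    have hcover : (Set.univ : Set X) ⊆ ⋃ n, U n := by
      intro x _
      have hev : ∀ᶠ m in atTop, ψ j m x < g x :=
        (hlim j hj x).eventually_lt_const (hlt x)
      obtain ⟨m, hm1, hm2⟩ := ((eventually_ge_atTop 1).and hev).exists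
      obtain ⟨n, rfl⟩ : ∃ n, m = n + 1 := ⟨m - 1, by omega⟩
      exact Set.mem_iUnion.2 ⟨n, hm2⟩
    obtain ⟨t, ht⟩ := isCompact_univ.elim_finite_subcover U hopen hcover
    refine ⟨t.sup id + 1, Nat.succ_le_succ (Nat.zero_le _), fun x => ?_⟩
    obtain ⟨n, hn, hxn⟩ := Set.mem_iUnion₂.1 (ht (Set.mem_univ x))
    have hle : n + 1 ≤ t.sup id + 1 := Nat.succ_le_succ (Finset.le_sup (f := id) hn)
    exact lt_of_le_of_lt (hanti j hj x (n + 1) (t.sup id + 1)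
      (Nat.succ_le_succ (Nat.zero_le n)) hle) hxn
  -- auxiliary: max (φ x) (-(j':ℝ)) ≤ max (φ x) (-(j:ℝ)) when j ≤ j'
  have hmaxmono : ∀ (x : X) (a b : ℕ), a ≤ b → max (φ x) (-(b : ℝ)) ≤ max (φ x) (-(a : ℝ)) := by
    intro x a b hab
    exact max_le_max le_rfl (neg_le_neg (by exact_mod_cast hab))
  -- the inductive step
  have hstep : ∀ j m : ℕ, ∃ K, m < K ∧ 1 ≤ K ∧ (1 ≤ j → 1 ≤ m →
      (∀ x, ψ (j + 1) K x < ψ j m x + ((2 : ℝ) ^ (j + 1))⁻¹) ∧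
      (∀ l, 1 ≤ l → l ≤ j → ∀ x, ψ (j + 1) K x < ψ l j x + ((2 : ℝ) ^ (j + 1))⁻¹)) := by
    intro j m
    by_cases hj : 1 ≤ j
    · by_cases hm : 1 ≤ m
      · have hj1 : 1 ≤ j + 1 := Nat.le_succ_of_le hj
        have hc : (0 : ℝ) < ((2 : ℝ) ^ (j + 1))⁻¹ := by positivity
        obtain ⟨K₀, hK₀1, hK₀⟩ := dini (j + 1) hj1
          (fun x => ψ j m x + ((2 : ℝ) ^ (j + 1))⁻¹)
          ((hcont j hj m hm).add continuous_const)
          (fun x => lt_of_le_of_lt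
            (le_trans (hmaxmono x j (j + 1) (Nat.le_succ j)) (hlb j hj m hm x))
            (by linarith))
        have hl : ∀ l : ℕ, ∃ K, 1 ≤ K ∧ (1 ≤ l → l ≤ j →
            ∀ x, ψ (j + 1) K x < ψ l j x + ((2 : ℝ) ^ (j + 1))⁻¹) := by
          intro l
          by_cases hlr : 1 ≤ l ∧ l ≤ j
          · obtain ⟨K, hK1, hK⟩ := dini (j + 1) hj1
              (fun x => ψ l j x + ((2 : ℝ) ^ (j + 1))⁻¹)
              ((hcont l hlr.1 j hj).add continuous_const)
              (fun x => lt_of_le_of_lt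
                (le_trans (hmaxmono x l (j + 1) (Nat.le_succ_of_le hlr.2))
                  (hlb l hlr.1 j hj x))
                (by linarith))
            exact ⟨K, hK1, fun _ _ => hK⟩
          · exact ⟨1, le_rfl, fun h1 h2 => absurd ⟨h1, h2⟩ hlr⟩
        choose G hG1 hG2 using hl
        refine ⟨max (max K₀ ((Finset.range (j + 1)).sup G)) (m + 1),
          lt_of_lt_of_le (Nat.lt_succ_self m) (le_max_right _ _),
          le_trans hK₀1 (le_trans (le_max_left _ _) (le_max_left _ _)),
          fun _ _ => ⟨?_, ?_⟩⟩
        · intro x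
          refine lt_of_le_of_lt (hanti (j + 1) hj1 x K₀ _ hK₀1 ?_) (hK₀ x)
          exact le_trans (le_max_left _ _) (le_max_left _ _)
        · intro l hl1 hlj x
          have hmem : l ∈ Finset.range (j + 1) := Finset.mem_range.2 (Nat.lt_succ_of_le hlj)
          have hGl : G l ≤ max (max K₀ ((Finset.range (j + 1)).sup G)) (m + 1) :=
            le_trans (Finset.le_sup hmem) (le_trans (le_max_right _ _) (le_max_left _ _))
          exact lt_of_le_of_lt (hanti (j + 1) hj1 x (G l) _ (hG1 l) hGl) (hG2 l hl1 hlj x)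
      · exact ⟨m + 1, Nat.lt_succ_self m, Nat.succ_le_succ (Nat.zero_le m),
          fun _ h => absurd h hm⟩
    · exact ⟨m + 1, Nat.lt_succ_self m, Nat.succ_le_succ (Nat.zero_le m),
        fun h => absurd h hj⟩
  choose F hFlt hF1 hFp using hstep
  refine ⟨fun n => Nat.rec (motive := fun _ => ℕ) 0 (fun j kj => F j kj) n, ?_, ?_, ?_, ?_⟩
  all_goals
    set k : ℕ → ℕ := fun n => Nat.rec (motive := fun _ => ℕ) 0 (fun j kj => F j kj) n with hkdef
  · exact strictMono_nat_of_lt_succ fun n => hFlt n (k n)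
  · intro j hj
    have h1 : 1 ≤ k 1 := hF1 0 0
    have hmono : StrictMono k := strictMono_nat_of_lt_succ fun n => hFlt n (k n)
    exact le_trans h1 (hmono.monotone hj)
  · intro j hj x
    have hk1 : 1 ≤ k j := by
      have h1 : 1 ≤ k 1 := hF1 0 0
      have hmono : StrictMono k := strictMono_nat_of_lt_succ fun n => hFlt n (k n)
      exact le_trans h1 (hmono.monotone hj)
    have hmain := (hFp j (k j) hj hk1).1 x
    have h2 : ((2 : ℝ) ^ (j + 1))⁻¹ + ((2 : ℝ) ^ (j + 1))⁻¹ = ((2 : ℝ) ^ j)⁻¹ := by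
      rw [pow_succ]
      have : (2 : ℝ) ^ j ≠ 0 := by positivity
      field_simp
      ring
    have hkk : k (j + 1) = F j (k j) := rfl
    rw [hkk]
    linarith
  · intro x
    have hmono : StrictMono k := strictMono_nat_of_lt_succ fun n => hFlt n (k n)
    have hk1 : ∀ j, 1 ≤ j → 1 ≤ k j := fun j hj =>
      le_trans (hF1 0 0) (hmono.monotone hj)
    refine tendsto_order.2 ⟨fun a ha => ?_, fun b hb => ?_⟩
    · filter_upwards [eventually_ge_atTop 1] with j hj
      have h1 := hlb j hj (k j) (hk1 j hj) x
      have h2 : φ x ≤ ψ j (k j) x := le_trans (le_max_left _ _) h1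
      have hpos : (0 : ℝ) < ((2 : ℝ) ^ j)⁻¹ := by positivity
      linarith
    · obtain ⟨l₀, hl₀⟩ := exists_nat_gt (-(φ x))
      set l : ℕ := l₀ + 1 with hldef
      have hl1 : 1 ≤ l := Nat.succ_le_succ (Nat.zero_le _)
      have hmax : max (φ x) (-(l : ℝ)) = φ x := by
        refine max_eq_left ?_
        push_cast
        linarith [show (l : ℝ) = l₀ + 1 by simp [hldef]]
      have htend : Tendsto (fun j : ℕ => ψ l j x + ((2 : ℝ) ^ j)⁻¹) atTop (nhds (φ x)) := by
        have h1 := hlim l hl1 x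
        rw [hmax] at h1
        have h2 : Tendsto (fun j : ℕ => ((2 : ℝ) ^ j)⁻¹) atTop (nhds 0) := by
          simpa [inv_pow] using
            tendsto_pow_atTop_nhds_zero_of_lt_one (by norm_num : (0:ℝ) ≤ 2⁻¹)
              (by norm_num : (2:ℝ)⁻¹ < 1)
        simpa using h1.add h2
      have hev : ∀ᶠ j in atTop, ψ l j x + ((2 : ℝ) ^ j)⁻¹ < b :=
        htend.eventually_lt_const hb
      rw [eventually_atTop] at hev ⊢
      obtain ⟨J, hJ⟩ := hev
      refine ⟨max J l + 1, fun j hj => ?_⟩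
      obtain ⟨i, rfl⟩ : ∃ i, j = i + 1 := ⟨j - 1, by omega⟩
      have hiJ : J ≤ i := by omega
      have hil : l ≤ i := by omega
      have hi1 : 1 ≤ i := le_trans hl1 hil
      have hmain := (hFp i (k i) hi1 (hk1 i hi1)).2 l hl1 hil x
      have h2 : ((2 : ℝ) ^ (i + 1))⁻¹ + ((2 : ℝ) ^ (i + 1))⁻¹ = ((2 : ℝ) ^ i)⁻¹ := by
        rw [pow_succ]
        have : (2 : ℝ) ^ i ≠ 0 := by positivity
        field_simp
        ring
      have hkk : k (i + 1) = F i (k i) := rfl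
      rw [hkk]
      have hb' := hJ i hiJ
      linarith
end
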